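/- arXiv:0710.4989 — 6 statements merged into one kernel-verified Lean document; each statement's English description precedes it below -/
import Mathlib

section
/- Let μ_1, ..., μ_M be distinct positive reals and let W be the space of real sequences (Δy_n)_{n≥1} with ∑_n μ^n |Δy_n|/n! < ∞ for μ = max μ_i and satisfying ∑_{n=1}^∞ (μ_i^n/n!) Δy_n = 0 for all i. Then every element of W is uniquely expressible as Δy = ∑_{m > M} Δy_m · w^{(m)}, where w^{(m)} are the basis sequences with w^{(m)}_m = 1, w^{(m)}_n = (−1)^{M−n+1}(n!/m!) s_{α(m−M,M−n)}(μ) for n ≤ M, and 0 otherwise. -/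
/-- The set of cells of the Young diagram with row lengths given by `lam`. -/
def youngCells (lam : List ℕ) : Finset (ℕ × ℕ) :=
  (Finset.range lam.length).biUnion fun i => {i} ×ˢ Finset.range (lam.getD i 0)

/-- The Schur polynomial `s_lam` in `M` variables, evaluated at `μ`, defined
combinatorially as the sum over semistandard fillings of the diagram `lam`
with entries in `Fin M` of the corresponding monomials. -/
noncomputable def schur (M : ℕ) (μ : Fin M → ℝ) (lam : List ℕ) : ℝ :=
  ∑ T : youngCells lam → Fin M,
    if (∀ c c' : youngCells lam,
          (c : ℕ × ℕ).1 = (c' : ℕ × ℕ).1 → (c : ℕ × ℕ).2 + 1 = (c' : ℕ × ℕ).2 → T c ≤ T c') ∧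
       (∀ c c' : youngCells lam,
          (c : ℕ × ℕ).1 + 1 = (c' : ℕ × ℕ).1 → (c : ℕ × ℕ).2 = (c' : ℕ × ℕ).2 → T c < T c')
    then ∏ c : youngCells lam, μ (T c) else 0


section Comb
variable {M : ℕ} (μ : Fin M → ℝ)

/-- `h_{a+1}` -/
noncomputable def rowSum (a : ℕ) : ℝ :=
  ∑ f : Fin (a+1) → Fin M, if Monotone f then ∏ i, μ (f i) else 0

/-- `e_k` -/
noncomputable def colSum (k : ℕ) : ℝ :=
  ∑ g : Fin k → Fin M, if StrictMono g then ∏ j, μ (g j) else 0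

/-- hook Schur `s_{(a+1, 1^b)}` -/
noncomputable def hookS (a b : ℕ) : ℝ :=
  ∑ f : Fin (a+1) → Fin M, ∑ g : Fin b → Fin M,
    if Monotone f ∧ StrictMono g ∧ (∀ j, f 0 < g j)
    then (∏ i, μ (f i)) * ∏ j, μ (g j) else 0

theorem monotone_cons_iff {n : ℕ} {α : Type*} [Preorder α] (x : α) (f : Fin n → α) :
    Monotone (Fin.cons x f : Fin (n+1) → α) ↔ Monotone f ∧ ∀ j, x ≤ f j := by
  constructor
  · intro h
    refine ⟨fun i j hij => ?_, fun j => ?_⟩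
    · have := h (show (i.succ : Fin (n+1)) ≤ j.succ by simpa using hij)
      simpa using this
    · have := h (show (0 : Fin (n+1)) ≤ j.succ by simp)
      simpa using this
  · rintro ⟨hf, hx⟩ i j hij
    induction i using Fin.cases with
    | zero =>
      induction j using Fin.cases with
      | zero => simp
      | succ j => simpa using hx j
    | succ i =>
      induction j using Fin.cases with
      | zero => simp at hij
      | succ j => simpa using hf (by simpa using hij)

theorem strictMono_cons_iff {n : ℕ} {α : Type*} [Preorder α] (x : α) (f : Fin n → α) :
    StrictMono (Fin.cons x f : Fin (n+1) → α) ↔ StrictMono f ∧ ∀ j, x < f j := by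
  constructor
  · intro h
    refine ⟨fun i j hij => ?_, fun j => ?_⟩
    · have := h (show (i.succ : Fin (n+1)) < j.succ by simpa using hij)
      simpa using this
    · have := h (show (0 : Fin (n+1)) < j.succ by simp [Fin.lt_def])
      simpa using this
  · rintro ⟨hf, hx⟩ i j hij
    induction i using Fin.cases with
    | zero =>
      induction j using Fin.cases with
      | zero => exact absurd hij (lt_irrefl _)
      | succ j => simpa using hx j
    | succ i =>
      induction j using Fin.cases with
      | zero => exact absurd hij (by simp [Fin.lt_def])
      | succ j => simpa using hf (by simpa using hij)

end Comb

section Hook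
variable {a b : ℕ}

theorem mem_hookCells {a b : ℕ} {c : ℕ × ℕ} :
    c ∈ youngCells ((a+1) :: List.replicate b 1) ↔
      (c.1 = 0 ∧ c.2 < a + 1) ∨ (0 < c.1 ∧ c.1 < b + 1 ∧ c.2 = 0) := by
  unfold youngCells
  simp only [Finset.mem_biUnion, Finset.mem_range, Finset.mem_product, Finset.mem_singleton,
    List.length_cons, List.length_replicate]
  constructor
  · rintro ⟨i, hi, h1, h2⟩
    rcases Nat.eq_zero_or_pos i with h | h
    · subst h; left
      simp only [List.getD_cons_zero] at h2
      exact ⟨h1, h2⟩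
    · right
      obtain ⟨i', rfl⟩ := Nat.exists_eq_add_of_lt h
      simp only [Nat.zero_add] at *
      have : ((1 :: List.replicate b 1 : List ℕ)).getD (i' + 1) 0 = (List.replicate b 1).getD i' 0 := by
        simp [List.getD_cons_succ]
      rw [List.getD_cons_succ] at h2
      have hb : i' < b := by omega
      rw [List.getD_eq_getElem?_getD] at h2
      simp [List.getElem?_replicate, hb] at h2
      omega
  · rintro (⟨h1, h2⟩ | ⟨h1, h2, h3⟩)
    · exact ⟨0, by omega, h1, by simpa [List.getD_cons_zero] using h2⟩
    · refine ⟨c.1, by omega, rfl, ?_⟩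
      obtain ⟨i', hi'⟩ := Nat.exists_eq_add_of_lt h1
      rw [show c.1 = i' + 1 by omega]
      simp only [List.getD_cons_succ]
      rw [List.getD_eq_getElem?_getD]
      simp [List.getElem?_replicate, show i' < b by omega]
      omega

def hookCell (a b : ℕ) (x : Fin (a+1) ⊕ Fin b) : youngCells ((a+1) :: List.replicate b 1) :=
  match x with
  | .inl j => ⟨(0, (j : ℕ)), mem_hookCells.2 (Or.inl ⟨rfl, j.isLt⟩)⟩
  | .inr i => ⟨((i : ℕ) + 1, 0), mem_hookCells.2 (Or.inr ⟨Nat.succ_pos _, by omega, rfl⟩)⟩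

theorem hookCell_bijective : Function.Bijective (hookCell a b) := by
  constructor
  · rintro (j | i) (j' | i') h <;>
      simp only [hookCell, Subtype.mk.injEq, Prod.mk.injEq] at h
    · exact congrArg Sum.inl (Fin.ext h.2)
    · omega
    · omega
    · exact congrArg Sum.inr (Fin.ext (by omega))
  · rintro ⟨c, hc⟩
    rcases mem_hookCells.1 hc with ⟨h1, h2⟩ | ⟨h1, h2, h3⟩
    · exact ⟨Sum.inl ⟨c.2, h2⟩, by simp [hookCell, ← h1]⟩
    · refine ⟨Sum.inr ⟨c.1 - 1, by omega⟩, ?_⟩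
      simp only [hookCell, Subtype.mk.injEq]
      rw [← h3]
      ext <;> simp <;> omega

noncomputable def hookCellEquiv (a b : ℕ) :
    (Fin (a+1) ⊕ Fin b) ≃ youngCells ((a+1) :: List.replicate b 1) :=
  Equiv.ofBijective _ (hookCell_bijective (a := a) (b := b))

@[simp] theorem hookCellEquiv_inl (j : Fin (a+1)) :
    ((hookCellEquiv a b (Sum.inl j) : ℕ × ℕ)) = (0, (j : ℕ)) := rfl

@[simp] theorem hookCellEquiv_inr (i : Fin b) :
    ((hookCellEquiv a b (Sum.inr i) : ℕ × ℕ)) = ((i : ℕ) + 1, 0) := rfl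

@[simp] theorem hookCellEquiv_inl_fst (j : Fin (a+1)) :
    ((hookCellEquiv a b (Sum.inl j) : ℕ × ℕ)).1 = 0 := rfl

@[simp] theorem hookCellEquiv_inl_snd (j : Fin (a+1)) :
    ((hookCellEquiv a b (Sum.inl j) : ℕ × ℕ)).2 = (j : ℕ) := rfl

@[simp] theorem hookCellEquiv_inr_fst (i : Fin b) :
    ((hookCellEquiv a b (Sum.inr i) : ℕ × ℕ)).1 = (i : ℕ) + 1 := rfl

@[simp] theorem hookCellEquiv_inr_snd (i : Fin b) :
    ((hookCellEquiv a b (Sum.inr i) : ℕ × ℕ)).2 = 0 := rfl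

end Hook

section HookMain
variable {M : ℕ} (μ : Fin M → ℝ) {a b : ℕ}

theorem hook_cond_iff (u : Fin (a+1) ⊕ Fin b → Fin M) :
    ((∀ c c' : youngCells ((a+1) :: List.replicate b 1),
        (c : ℕ × ℕ).1 = (c' : ℕ × ℕ).1 → (c : ℕ × ℕ).2 + 1 = (c' : ℕ × ℕ).2 →
          u ((hookCellEquiv a b).symm c) ≤ u ((hookCellEquiv a b).symm c')) ∧
     (∀ c c' : youngCells ((a+1) :: List.replicate b 1),
        (c : ℕ × ℕ).1 + 1 = (c' : ℕ × ℕ).1 → (c : ℕ × ℕ).2 = (c' : ℕ × ℕ).2 →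
          u ((hookCellEquiv a b).symm c) < u ((hookCellEquiv a b).symm c')))
    ↔ (Monotone (u ∘ Sum.inl) ∧ StrictMono (u ∘ Sum.inr) ∧
        ∀ j : Fin b, u (Sum.inl 0) < u (Sum.inr j)) := by
  constructor
  · rintro ⟨hr, hc⟩
    have hmon : Monotone (u ∘ Sum.inl) := by
      rw [Fin.monotone_iff_le_succ]
      intro i
      have := hr (hookCellEquiv a b (Sum.inl i.castSucc)) (hookCellEquiv a b (Sum.inl i.succ))
        (by simp) (by simp)
      simpa using this
    have hstr : StrictMono (u ∘ Sum.inr) := by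
      cases b with
      | zero => exact fun i => i.elim0
      | succ b' =>
        rw [Fin.strictMono_iff_lt_succ]
        intro i
        have := hc (hookCellEquiv a _ (Sum.inr i.castSucc)) (hookCellEquiv a _ (Sum.inr i.succ))
          (by simp) (by simp)
        simpa using this
    refine ⟨hmon, hstr, fun j => ?_⟩
    have hb : 0 < b := j.pos
    have h0 := hc (hookCellEquiv a b (Sum.inl 0)) (hookCellEquiv a b (Sum.inr ⟨0, hb⟩))
      (by simp) (by simp)
    simp only [Equiv.symm_apply_apply] at h0
    exact lt_of_lt_of_le h0 (hstr.monotone (show (⟨0, hb⟩ : Fin b) ≤ j by simp [Fin.le_def]))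
  · rintro ⟨hf, hg, hfg⟩
    constructor
    · intro c c' h1 h2
      obtain ⟨x, rfl⟩ := (hookCellEquiv a b).surjective c
      obtain ⟨x', rfl⟩ := (hookCellEquiv a b).surjective c'
      simp only [Equiv.symm_apply_apply]
      rcases x with j | i <;> rcases x' with j' | i' <;>
        simp only [hookCellEquiv_inl_fst, hookCellEquiv_inl_snd, hookCellEquiv_inr_fst,
          hookCellEquiv_inr_snd] at h1 h2
      · exact hf (show j ≤ j' by rw [Fin.le_def]; omega)
      · omega
      · omega
      · omega
    · intro c c' h1 h2
      obtain ⟨x, rfl⟩ := (hookCellEquiv a b).surjective c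
      obtain ⟨x', rfl⟩ := (hookCellEquiv a b).surjective c'
      simp only [Equiv.symm_apply_apply]
      rcases x with j | i <;> rcases x' with j' | i' <;>
        simp only [hookCellEquiv_inl_fst, hookCellEquiv_inl_snd, hookCellEquiv_inr_fst,
          hookCellEquiv_inr_snd] at h1 h2
      · omega
      · have hj : j = 0 := Fin.ext (by simp only [Fin.val_zero]; omega)
        subst hj
        exact hfg i'
      · omega
      · exact hg (show i < i' by rw [Fin.lt_def]; omega)

theorem schur_hook (a b : ℕ) :
    schur M μ ((a+1) :: List.replicate b 1) = hookS μ a b := by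
  classical
  rw [schur]
  trans (∑ u : (Fin (a+1) ⊕ Fin b) → Fin M,
      if Monotone (u ∘ Sum.inl) ∧ StrictMono (u ∘ Sum.inr) ∧
          (∀ j : Fin b, u (Sum.inl 0) < u (Sum.inr j))
       then (∏ i, μ (u (Sum.inl i))) * ∏ j, μ (u (Sum.inr j)) else 0)
  · refine (Fintype.sum_equiv (Equiv.arrowCongr (hookCellEquiv a b) (Equiv.refl (Fin M)))
      _ _ fun u => ?_).symm
    have hEapp : ∀ c, (Equiv.arrowCongr (hookCellEquiv a b) (Equiv.refl (Fin M))) u c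
        = u ((hookCellEquiv a b).symm c) := by
      intro c; simp [Equiv.arrowCongr]
    simp only [hEapp]
    rw [if_congr (hook_cond_iff u) rfl rfl]
    congr 1
    have := Equiv.prod_comp (hookCellEquiv a b)
      (fun c => μ (u ((hookCellEquiv a b).symm c)))
    simp only [Equiv.symm_apply_apply] at this
    rw [← this, Fintype.prod_sum_type]
  · rw [hookS]
    trans (∑ p : (Fin (a+1) → Fin M) × (Fin b → Fin M),
      if Monotone p.1 ∧ StrictMono p.2 ∧ (∀ j : Fin b, p.1 0 < p.2 j)
       then (∏ i, μ (p.1 i)) * ∏ j, μ (p.2 j) else 0)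
    · exact Fintype.sum_equiv (Equiv.sumArrowEquivProdArrow (Fin (a+1)) (Fin b) (Fin M))
        _ _ fun u => rfl
    · exact Fintype.sum_prod_type _

end HookMain

theorem sum_sum_eq_sum_prod {α β : Type*} [Fintype α] [Fintype β] (F : α → β → ℝ) :
    ∑ x : α, ∑ y : β, F x y = ∑ p : α × β, F p.1 p.2 := by
  rw [Fintype.sum_prod_type]

section Identities
variable {M : ℕ} (μ : Fin M → ℝ)

theorem hookS_b_zero (a : ℕ) : hookS μ a 0 = rowSum μ a := by
  rw [hookS, rowSum]
  refine Finset.sum_congr rfl fun f _ => ?_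
  rw [Fintype.sum_subsingleton _ (fun i : Fin 0 => i.elim0)]
  have h1 : StrictMono (fun i : Fin 0 => (i.elim0 : Fin M)) := fun i => i.elim0
  simp [h1]

theorem hookS_col (b : ℕ) : hookS μ 0 b = colSum μ (b+1) := by
  rw [hookS, colSum, sum_sum_eq_sum_prod (fun f g => if Monotone f ∧ StrictMono g ∧ ∀ (j : Fin b), f 0 < g j then (∏ i : Fin (0 + 1), μ (f i)) * ∏ j : Fin b, μ (g j) else 0)]
  refine Fintype.sum_equiv
    (⟨fun p => Fin.cons (p.1 0) p.2, fun h => (fun _ => h 0, Fin.tail h),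
      fun p => by
        refine Prod.ext (funext fun x => ?_) ?_
        · rw [Subsingleton.elim x 0]; simp
        · simp,
      fun h => by simp⟩ :
      ((Fin 1 → Fin M) × (Fin b → Fin M)) ≃ (Fin (b+1) → Fin M))
    _ _ fun p => ?_
  have hmono : Monotone p.1 := by intro i j _; rw [Subsingleton.elim i j]
  have hcond : (Monotone p.1 ∧ StrictMono p.2 ∧ ∀ j, p.1 0 < p.2 j) ↔
      StrictMono (Fin.cons (p.1 0) p.2 : Fin (b+1) → Fin M) := by
    rw [strictMono_cons_iff]
    tauto
  simp only [Equiv.coe_fn_mk]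
  rw [if_congr hcond rfl rfl]
  congr 1
  simp [Fin.prod_univ_succ]

theorem hookS_too_long (a : ℕ) : hookS μ a M = 0 := by
  rw [hookS]
  refine Finset.sum_eq_zero fun f _ => Finset.sum_eq_zero fun g _ => ?_
  rw [if_neg]
  rintro ⟨hf, hg, hfg⟩
  have hbij : Function.Bijective g :=
    (Finite.injective_iff_bijective).1 hg.injective
  obtain ⟨j, hj⟩ := hbij.2 (f 0)
  exact absurd (hj ▸ hfg j) (lt_irrefl _)

theorem pieri (a b : ℕ) :
    rowSum μ a * colSum μ (b+1) = hookS μ a (b+1) + hookS μ (a+1) b := by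
  rw [rowSum, colSum, Finset.sum_mul_sum]
  have expand : ∀ (f : Fin (a+1) → Fin M) (h : Fin (b+1) → Fin M),
      (if Monotone f then ∏ i, μ (f i) else 0) * (if StrictMono h then ∏ j, μ (h j) else 0)
      = (if Monotone f ∧ StrictMono h ∧ f 0 < h 0
          then (∏ i, μ (f i)) * ∏ j, μ (h j) else 0)
        + (if Monotone f ∧ StrictMono h ∧ ¬ (f 0 < h 0)
          then (∏ i, μ (f i)) * ∏ j, μ (h j) else 0) := by
    intro f h
    by_cases h1 : Monotone f <;> by_cases h2 : StrictMono h <;> by_cases h3 : f 0 < h 0 <;>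
      simp [h1, h2, h3]
  simp only [expand, Finset.sum_add_distrib]
  congr 1
  · rw [hookS]
    refine Finset.sum_congr rfl fun f _ => Finset.sum_congr rfl fun h _ => ?_
    refine if_congr ?_ rfl rfl
    constructor
    · rintro ⟨h1, h2, h3⟩
      exact ⟨h1, h2, fun j => lt_of_lt_of_le h3 (h2.monotone (Fin.zero_le j))⟩
    · rintro ⟨h1, h2, h3⟩
      exact ⟨h1, h2, h3 0⟩
  · rw [hookS, sum_sum_eq_sum_prod (fun f h => if Monotone f ∧ StrictMono h ∧ ¬ f 0 < h 0 then (∏ i : Fin (a + 1), μ (f i)) * ∏ j : Fin (b + 1), μ (h j) else 0),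
      sum_sum_eq_sum_prod (fun f g => if Monotone f ∧ StrictMono g ∧ ∀ (j : Fin b), f 0 < g j then (∏ i : Fin (a + 1 + 1), μ (f i)) * ∏ j : Fin b, μ (g j) else 0)]
    refine Fintype.sum_equiv
      (⟨fun p => (Fin.cons (p.2 0) p.1, Fin.tail p.2),
        fun q => (Fin.tail q.1, Fin.cons (q.1 0) q.2),
        fun p => by simp,
        fun q => by simp⟩ :
        ((Fin (a+1) → Fin M) × (Fin (b+1) → Fin M)) ≃ ((Fin (a+2) → Fin M) × (Fin b → Fin M)))
      _ _ fun p => ?_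
    obtain ⟨f, h⟩ := p
    simp only [Equiv.coe_fn_mk]
    have htail : Fin.tail h = h ∘ Fin.succ := rfl
    have hcond : (Monotone f ∧ StrictMono h ∧ ¬ (f 0 < h 0)) ↔
        (Monotone (Fin.cons (h 0) f : Fin (a+2) → Fin M) ∧ StrictMono (Fin.tail h) ∧
          ∀ j, (Fin.cons (h 0) f : Fin (a+2) → Fin M) 0 < Fin.tail h j) := by
      rw [monotone_cons_iff]
      simp only [Fin.cons_zero]
      constructor
      · rintro ⟨h1, h2, h3⟩
        push_neg at h3
        refine ⟨⟨h1, fun j => le_trans h3 (h1 (Fin.zero_le j))⟩, ?_, fun j => ?_⟩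
        · intro i j hij
          exact h2 (by simpa [Fin.succ_lt_succ_iff] using hij)
        · exact h2 (Fin.succ_pos j)
      · rintro ⟨⟨h1, h2⟩, h3, h4⟩
        refine ⟨h1, ?_, not_lt.2 (h2 0)⟩
        have := strictMono_cons_iff (h 0) (Fin.tail h)
        rw [Fin.cons_self_tail] at this
        exact this.2 ⟨h3, h4⟩
    rw [if_congr hcond rfl rfl]
    by_cases hc : Monotone (Fin.cons (h 0) f : Fin (a+2) → Fin M) ∧ StrictMono (Fin.tail h) ∧
          ∀ j, (Fin.cons (h 0) f : Fin (a+2) → Fin M) 0 < Fin.tail h j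
    · rw [if_pos hc, if_pos hc]
      simp only [Fin.prod_univ_succ, Fin.cons_zero, Fin.cons_succ, Fin.tail]
      ring
    · rw [if_neg hc, if_neg hc]

end Identities

section Esymm
variable {M : ℕ} (μ : Fin M → ℝ)

theorem colSum_zero : colSum μ 0 = 1 := by
  rw [colSum]
  rw [Fintype.sum_subsingleton _ (fun i : Fin 0 => i.elim0)]
  have h1 : StrictMono (fun i : Fin 0 => (i.elim0 : Fin M)) := fun i => i.elim0
  simp [h1]

theorem colSum_eq_esymm (k : ℕ) :
    colSum μ k = ∑ t ∈ Finset.powersetCard k (Finset.univ : Finset (Fin M)), ∏ i ∈ t, μ i := by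
  classical
  rw [colSum, ← Finset.sum_filter]
  refine Finset.sum_bij (fun g _ => Finset.image g Finset.univ) ?_ ?_ ?_ ?_
  · intro g hg
    rw [Finset.mem_filter] at hg
    rw [Finset.mem_powersetCard]
    exact ⟨Finset.subset_univ _, by
      rw [Finset.card_image_of_injective _ hg.2.injective, Finset.card_univ, Fintype.card_fin]⟩
  · intro g hg g' hg' himg
    have himg' : Finset.image g Finset.univ = Finset.image g' Finset.univ := himg
    rw [Finset.mem_filter] at hg hg'
    have hcard : (Finset.image g Finset.univ).card = k := by
      rw [Finset.card_image_of_injective _ hg.2.injective, Finset.card_univ, Fintype.card_fin]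
    have h1 := Finset.orderEmbOfFin_unique hcard (f := g)
      (fun x => Finset.mem_image_of_mem g (Finset.mem_univ x)) hg.2
    have h2 := Finset.orderEmbOfFin_unique hcard (f := g')
      (fun x => by rw [himg']; exact Finset.mem_image_of_mem g' (Finset.mem_univ x)) hg'.2
    rw [h1, h2]
  · intro t ht
    rw [Finset.mem_powersetCard] at ht
    refine ⟨t.orderEmbOfFin ht.2, ?_, ?_⟩
    · rw [Finset.mem_filter]
      exact ⟨Finset.mem_univ _, (t.orderEmbOfFin ht.2).strictMono⟩
    · apply Finset.coe_injective
      rw [Finset.coe_image, Finset.coe_univ, Set.image_univ, Finset.range_orderEmbOfFin]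
  · intro g hg
    rw [Finset.mem_filter] at hg
    rw [Finset.prod_image (fun x _ y _ h => hg.2.injective h)]

theorem vieta_colSum (i : Fin M) :
    ∑ k ∈ Finset.range (M+1), (-1 : ℝ)^k * colSum μ k * (μ i)^(M-k) = 0 := by
  classical
  have hcard : Multiset.card ((Finset.univ : Finset (Fin M)).val.map μ) = M := by
    simp
  have hzero : Polynomial.eval (μ i)
      ((((Finset.univ : Finset (Fin M)).val.map μ).map
        (fun t => Polynomial.X - Polynomial.C t)).prod) = 0 := by
    rw [Polynomial.eval_multiset_prod]
    refine Multiset.prod_eq_zero ?_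
    rw [Multiset.map_map, Multiset.map_map, Multiset.mem_map]
    refine ⟨i, by simp, by simp⟩
  have hdeg : ((((Finset.univ : Finset (Fin M)).val.map μ).map
      (fun t => Polynomial.X - Polynomial.C t)).prod).natDegree = M := by
    rw [Polynomial.natDegree_multiset_prod_of_monic]
    · simp [Multiset.map_map, Function.comp_def]
    · intro p hp
      simp only [Multiset.mem_map] at hp
      obtain ⟨x, _, rfl⟩ := hp
      exact Polynomial.monic_X_sub_C x
  have heval := Polynomial.eval_eq_sum_range' (n := M + 1) (p := (((Finset.univ : Finset (Fin M)).val.map μ).map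
      (fun t => Polynomial.X - Polynomial.C t)).prod) (by rw [hdeg]; omega) (μ i)
  rw [heval] at hzero
  rw [← hzero]
  have hcoeff : ∀ k, k ≤ M → ((((Finset.univ : Finset (Fin M)).val.map μ).map
      (fun t => Polynomial.X - Polynomial.C t)).prod).coeff k
      = (-1 : ℝ)^(M - k) * colSum μ (M - k) := by
    intro k hk
    rw [Multiset.prod_X_sub_C_coeff _ (by rw [hcard]; exact hk), hcard]
    congr 1
    rw [Finset.esymm_map_val, colSum_eq_esymm]
  rw [← Finset.sum_range_reflect]
  refine Finset.sum_congr rfl fun k hk => ?_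
  rw [Finset.mem_range] at hk
  rw [hcoeff k (by omega)]
  rw [show M + 1 - 1 - k = M - k by omega, show M - (M - k) = k by omega]

end Esymm

section AltSum
variable {M : ℕ} (μ : Fin M → ℝ)

theorem colSum_alt (i : Fin M) :
    ∑ b ∈ Finset.range M, (-1:ℝ)^b * colSum μ (b+1) * (μ i)^(M-b) = (μ i)^(M+1) := by
  have hv := vieta_colSum μ i
  rw [Finset.sum_range_succ', colSum_zero] at hv
  simp only [Nat.sub_zero, pow_zero, one_mul, mul_one] at hv
  have key : ∀ b ∈ Finset.range M, (-1:ℝ)^b * colSum μ (b+1) * (μ i)^(M-b)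
      = (-((-1:ℝ)^(b+1) * colSum μ (b+1) * (μ i)^(M-(b+1)))) * (μ i) := by
    intro b hb; rw [Finset.mem_range] at hb
    rw [show M - b = (M - (b+1)) + 1 from by omega]
    ring
  rw [Finset.sum_congr rfl key, ← Finset.sum_mul, Finset.sum_neg_distrib]
  have h2 : ∑ b ∈ Finset.range M, (-1:ℝ)^(b+1) * colSum μ (b+1) * (μ i)^(M-(b+1))
      = -((μ i)^M) := by linarith
  rw [h2]
  ring

theorem hookS_alt (i : Fin M) (a : ℕ) :
    ∑ b ∈ Finset.range M, (-1:ℝ)^b * (μ i)^(M-b) * hookS μ a b = (μ i)^(M+1+a) := by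
  induction a with
  | zero =>
    have h1 : ∀ b ∈ Finset.range M, (-1:ℝ)^b * (μ i)^(M-b) * hookS μ 0 b
        = (-1:ℝ)^b * colSum μ (b+1) * (μ i)^(M-b) := by
      intro b _; rw [hookS_col]; ring
    rw [Finset.sum_congr rfl h1, colSum_alt]
  | succ a ih =>
    have hT1 : ∑ b ∈ Finset.range (M+1), (-1:ℝ)^b * (μ i)^(M+1-b) * hookS μ a b
        = (μ i) * (μ i)^(M+1+a) := by
      rw [Finset.sum_range_succ, hookS_too_long]
      have h1 : ∀ b ∈ Finset.range M, (-1:ℝ)^b * (μ i)^(M+1-b) * hookS μ a b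
          = (μ i) * ((-1:ℝ)^b * (μ i)^(M-b) * hookS μ a b) := by
        intro b hb; rw [Finset.mem_range] at hb
        rw [show M+1-b = (M-b)+1 from by omega]; ring
      rw [Finset.sum_congr rfl h1, ← Finset.mul_sum, ih]
      ring
    have hT2 : ∑ b ∈ Finset.range (M+1), (-1:ℝ)^b * (μ i)^(M+1-b) * hookS μ a b
        = (μ i)^(M+1) * rowSum μ a
          - ∑ b ∈ Finset.range M, (-1:ℝ)^b * (μ i)^(M-b) * hookS μ a (b+1) := by
      rw [Finset.sum_range_succ', hookS_b_zero]
      have h1 : ∀ b ∈ Finset.range M, (-1:ℝ)^(b+1) * (μ i)^(M+1-(b+1)) * hookS μ a (b+1)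
          = -((-1:ℝ)^b * (μ i)^(M-b) * hookS μ a (b+1)) := by
        intro b hb
        rw [show M+1-(b+1) = M - b from by omega]; ring
      rw [Finset.sum_congr rfl h1, Finset.sum_neg_distrib]
      simp only [Nat.sub_zero]
      ring
    have hS1 : ∑ b ∈ Finset.range M, (-1:ℝ)^b * (μ i)^(M-b) * hookS μ a (b+1)
        = (μ i)^(M+1) * rowSum μ a - (μ i) * (μ i)^(M+1+a) := by
      have := hT1.symm.trans hT2
      linarith
    have hstep : ∀ b ∈ Finset.range M, (-1:ℝ)^b * (μ i)^(M-b) * hookS μ (a+1) b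
        = (-1:ℝ)^b * colSum μ (b+1) * (μ i)^(M-b) * rowSum μ a
          - (-1:ℝ)^b * (μ i)^(M-b) * hookS μ a (b+1) := by
      intro b _
      linear_combination (-((-1:ℝ)^b * (μ i)^(M-b))) * (pieri μ a b)
    rw [Finset.sum_congr rfl hstep, Finset.sum_sub_distrib, hS1]
    have h3 : ∀ b ∈ Finset.range M, (-1:ℝ)^b * colSum μ (b+1) * (μ i)^(M-b) * rowSum μ a
        = ((-1:ℝ)^b * colSum μ (b+1) * (μ i)^(M-b)) * rowSum μ a := by
      intro b _; ring
    rw [Finset.sum_congr rfl h3, ← Finset.sum_mul, colSum_alt]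
    rw [show M+1+(a+1) = (M+1+a)+1 from by omega, pow_succ]
    ring

end AltSum

theorem key_identity {M : ℕ} (μ : Fin M → ℝ) {m : ℕ} (hm : M < m) (i : Fin M) :
    ∑ n ∈ Finset.range M, (μ i)^(n+1) / ((n+1).factorial : ℝ) *
      ((-1:ℝ)^(M-(n+1)+1) * (((n+1).factorial : ℝ)/(m.factorial : ℝ)) *
        schur M μ ((m-M) :: List.replicate (M-(n+1)) 1))
    = -((μ i)^m / (m.factorial : ℝ)) := by
  obtain ⟨a, ha⟩ : ∃ a, m - M = a + 1 := ⟨m - M - 1, by omega⟩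
  rw [ha]
  have hs : ∀ k : ℕ, schur M μ ((a+1) :: List.replicate k 1) = hookS μ a k :=
    fun k => schur_hook μ a k
  simp only [hs]
  rw [← Finset.sum_range_reflect]
  have hterm : ∀ n ∈ Finset.range M,
      (μ i)^((M-1-n)+1) / (((M-1-n)+1).factorial : ℝ) *
        ((-1:ℝ)^(M-((M-1-n)+1)+1) * ((((M-1-n)+1).factorial : ℝ)/(m.factorial : ℝ)) *
          hookS μ a (M-((M-1-n)+1)))
      = ((-1:ℝ)^n * (μ i)^(M-n) * hookS μ a n) * (-(1/(m.factorial : ℝ))) := by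
    intro n hn
    rw [Finset.mem_range] at hn
    rw [show M-1-n+1 = M-n from by omega, show M-(M-n) = n from by omega]
    have hf : (((M-n).factorial : ℕ) : ℝ) ≠ 0 := Nat.cast_ne_zero.2 (Nat.factorial_ne_zero _)
    field_simp
    ring
  rw [Finset.sum_congr rfl hterm, ← Finset.sum_mul, hookS_alt]
  rw [show M+1+a = m from by omega]
  ring


/-- Every sequence `Δy` in the constraint space `W` (absolutely summable against
`μmax ^ n / n!` and annihilated by all the decoy constraints) is uniquely
expressible as `Δy = ∑_{m > M} Δy m • w^(m)`, where `w^(m)` are the basis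
sequences built from hook Schur polynomials. -/
theorem basis_expansion_of_W (M : ℕ) (hM : 0 < M) (μ : Fin M → ℝ)
    (hpos : ∀ i, 0 < μ i) (hinj : Function.Injective μ)
    (μmax : ℝ) (hmax : IsGreatest (Set.range μ) μmax)
    (w : ℕ → ℕ → ℝ)
    (hw_low : ∀ m, M < m → ∀ n, 1 ≤ n → n ≤ M → w m n =
      (-1 : ℝ) ^ (M - n + 1) * ((n.factorial : ℝ) / (m.factorial : ℝ)) *
        schur M μ ((m - M) :: List.replicate (M - n) 1))
    (hw_m : ∀ m, M < m → w m m = 1)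
    (hw_zero : ∀ m, M < m → ∀ n, M < n → n ≠ m → w m n = 0)
    (Δy : ℕ → ℝ)
    (hsummable : Summable fun n : ℕ => μmax ^ (n + 1) * |Δy (n + 1)| / ((n + 1).factorial : ℝ))
    (hW : ∀ i : Fin M,
      ∑' n : ℕ, (μ i ^ (n + 1) / ((n + 1).factorial : ℝ)) * Δy (n + 1) = 0) :
    (∀ n, 1 ≤ n → Δy n = ∑' k : ℕ, Δy (M + 1 + k) * w (M + 1 + k) n) ∧
    (∀ c : ℕ → ℝ, (∀ n, 1 ≤ n → Δy n = ∑' k : ℕ, c (M + 1 + k) * w (M + 1 + k) n) →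
      ∀ m, M < m → c m = Δy m) := by
  classical
  obtain ⟨i0, hi0⟩ := hmax.1
  have hμmax_pos : 0 < μmax := hi0 ▸ hpos i0
  have hμle : ∀ i, μ i ≤ μmax := fun i => hmax.2 ⟨i, rfl⟩
  -- the constraint matrix
  set A : Matrix (Fin M) (Fin M) ℝ :=
    Matrix.of (fun i n : Fin M => (μ i)^((n:ℕ)+1) / (((n:ℕ)+1).factorial : ℝ)) with hA
  have hAapp : ∀ i n : Fin M, A i n = (μ i)^((n:ℕ)+1) / (((n:ℕ)+1).factorial : ℝ) :=
    fun i n => rfl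
  have hAeq : A = Matrix.diagonal μ *
      (Matrix.vandermonde μ * Matrix.diagonal (fun n : Fin M => 1/(((n:ℕ)+1).factorial : ℝ))) := by
    ext i j
    rw [Matrix.diagonal_mul, Matrix.mul_diagonal, hAapp, Matrix.vandermonde]
    rw [pow_succ]
    have : (((j:ℕ)+1).factorial : ℝ) ≠ 0 := Nat.cast_ne_zero.2 (Nat.factorial_ne_zero _)
    field_simp
    simp only [Matrix.of_apply]
    ring
  have hdet : A.det ≠ 0 := by
    rw [hAeq, Matrix.det_mul, Matrix.det_mul, Matrix.det_diagonal, Matrix.det_diagonal]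
    refine mul_ne_zero (Finset.prod_ne_zero_iff.2 fun i _ => ne_of_gt (hpos i))
      (mul_ne_zero (Matrix.det_vandermonde_ne_zero_iff.2 hinj)
        (Finset.prod_ne_zero_iff.2 fun n _ => by positivity))
  haveI : Invertible A := A.invertibleOfIsUnitDet (isUnit_iff_ne_zero.2 hdet)
  -- the key linear relations
  have hmulvec : ∀ m, M < m →
      A.mulVec (fun n : Fin M => w m ((n:ℕ)+1)) =
        fun i => -((μ i)^m / (m.factorial : ℝ)) := by
    intro m hm
    funext i
    simp only [Matrix.mulVec, dotProduct, hAapp]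
    rw [Fin.sum_univ_eq_sum_range
      (fun n => (μ i)^(n+1) / ((n+1).factorial : ℝ) * w m (n+1)) M]
    have hcon : ∀ n ∈ Finset.range M,
        (μ i)^(n+1) / ((n+1).factorial : ℝ) * w m (n+1)
        = (μ i)^(n+1) / ((n+1).factorial : ℝ) *
          ((-1 : ℝ) ^ (M - (n+1) + 1) * (((n+1).factorial : ℝ) / (m.factorial : ℝ)) *
            schur M μ ((m - M) :: List.replicate (M - (n+1)) 1)) := by
      intro n hn
      rw [Finset.mem_range] at hn
      rw [hw_low m hm (n+1) (by omega) (by omega)]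
    rw [Finset.sum_congr rfl hcon]
    exact key_identity μ hm i
  have hwformula : ∀ m, M < m → ∀ n : Fin M,
      w m ((n:ℕ)+1) = ∑ i, (A⁻¹) n i * (-((μ i)^m / (m.factorial : ℝ))) := by
    intro m hm n
    have h := Matrix.inv_mulVec_eq_vec (hmulvec m hm).symm
    have h2 := congrFun h n
    rw [← h2]
    simp [Matrix.mulVec, dotProduct]
  set C : Fin M → ℝ := fun n => ∑ i, |(A⁻¹) n i| with hC
  have hwbound : ∀ m, M < m → ∀ n : Fin M,
      |w m ((n:ℕ)+1)| ≤ C n * (μmax^m / (m.factorial : ℝ)) := by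
    intro m hm n
    rw [hwformula m hm n]
    calc |∑ i, (A⁻¹) n i * (-((μ i)^m / (m.factorial : ℝ)))|
        ≤ ∑ i, |(A⁻¹) n i * (-((μ i)^m / (m.factorial : ℝ)))| :=
          Finset.abs_sum_le_sum_abs _ _
      _ ≤ ∑ i, |(A⁻¹) n i| * (μmax^m / (m.factorial : ℝ)) := by
          refine Finset.sum_le_sum fun i _ => ?_
          rw [abs_mul, abs_neg, abs_of_nonneg (show (0:ℝ) ≤ (μ i)^m / (m.factorial : ℝ) from
            div_nonneg (pow_nonneg (hpos i).le m) (Nat.cast_nonneg _))]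
          refine mul_le_mul_of_nonneg_left ?_ (abs_nonneg _)
          gcongr
          · exact (hpos i).le
          · exact hμle i
      _ = C n * (μmax^m / (m.factorial : ℝ)) := by rw [← Finset.sum_mul]
  
  -- summability of the tails
  have hshift : Summable (fun k : ℕ =>
      μmax^(M+1+k) * |Δy (M+1+k)| / (((M+1+k).factorial : ℝ))) := by
    have h := (summable_nat_add_iff
      (f := fun n : ℕ => μmax ^ (n + 1) * |Δy (n + 1)| / ((n + 1).factorial : ℝ)) M).2 hsummable
    exact h.congr fun k => by rw [show k + M + 1 = M + 1 + k from by omega]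
  have hsumm_w : ∀ n : Fin M,
      Summable (fun k : ℕ => Δy (M+1+k) * w (M+1+k) ((n:ℕ)+1)) := by
    intro n
    refine Summable.of_abs (Summable.of_nonneg_of_le (fun k => abs_nonneg _) (fun k => ?_)
      (hshift.mul_left (C n)))
    rw [abs_mul]
    calc |Δy (M+1+k)| * |w (M+1+k) ((n:ℕ)+1)|
        ≤ |Δy (M+1+k)| * (C n * (μmax^(M+1+k) / (((M+1+k).factorial : ℝ)))) :=
          mul_le_mul_of_nonneg_left (hwbound (M+1+k) (by omega) n) (abs_nonneg _)
      _ = C n * (μmax^(M+1+k) * |Δy (M+1+k)| / (((M+1+k).factorial : ℝ))) := by ring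
  -- tail formula for n > M
  have htail : ∀ (c : ℕ → ℝ) (n : ℕ), M < n →
      (∑' k : ℕ, c (M + 1 + k) * w (M + 1 + k) n) = c n := by
    intro c n hn
    rw [tsum_eq_single (n - M - 1) ?_]
    · rw [show M + 1 + (n - M - 1) = n from by omega, hw_m n hn, mul_one]
    · intro k hk
      rw [hw_zero (M+1+k) (by omega) n hn (by omega), mul_zero]
  -- summability of the constraints
  have hFsumm : ∀ i : Fin M,
      Summable (fun n : ℕ => (μ i ^ (n + 1) / ((n + 1).factorial : ℝ)) * Δy (n + 1)) := by
    intro i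
    refine Summable.of_abs (Summable.of_nonneg_of_le (fun n => abs_nonneg _) (fun n => ?_)
      hsummable)
    rw [abs_mul, abs_of_nonneg (show (0:ℝ) ≤ μ i ^ (n+1) / (((n+1).factorial : ℝ)) from
      div_nonneg (pow_nonneg (hpos i).le _) (Nat.cast_nonneg _))]
    rw [div_mul_eq_mul_div, mul_comm (μ i ^ (n+1)) (|Δy (n+1)|), ← div_mul_eq_mul_div,
      mul_comm]
    rw [mul_div_assoc]
    exact mul_le_mul_of_nonneg_right (pow_le_pow_left₀ (hpos i).le (hμle i) _)
      (div_nonneg (abs_nonneg _) (Nat.cast_nonneg _))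
  have hzero2 : ∀ i : Fin M,
      (∑ n ∈ Finset.range M, (μ i ^ (n + 1) / ((n + 1).factorial : ℝ)) * Δy (n + 1))
      + (∑' k : ℕ, (μ i ^ (M+1+k) / (((M+1+k).factorial : ℝ))) * Δy (M+1+k)) = 0 := by
    intro i
    have h := (hFsumm i).sum_add_tsum_nat_add M
    rw [hW i] at h
    rw [← h]
    congr 1
    refine tsum_congr fun k => ?_
    rw [show k + M + 1 = M + 1 + k from by omega]
  -- the matrix equation for the defect vector
  have hmv : A.mulVec (fun n : Fin M =>
      Δy ((n:ℕ)+1) - ∑' k : ℕ, Δy (M+1+k) * w (M+1+k) ((n:ℕ)+1)) = 0 := by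
    funext i
    simp only [Matrix.mulVec, dotProduct, Pi.zero_apply]
    have hsplit : ∀ n : Fin M, A i n *
        (Δy ((n:ℕ)+1) - ∑' k : ℕ, Δy (M+1+k) * w (M+1+k) ((n:ℕ)+1))
        = A i n * Δy ((n:ℕ)+1) - ∑' k : ℕ, A i n * (Δy (M+1+k) * w (M+1+k) ((n:ℕ)+1)) := by
      intro n
      rw [mul_sub, tsum_mul_left]
    rw [Finset.sum_congr rfl (fun n _ => hsplit n), Finset.sum_sub_distrib]
    have hswap : ∑ n : Fin M, ∑' k : ℕ, A i n * (Δy (M+1+k) * w (M+1+k) ((n:ℕ)+1))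
        = ∑' k : ℕ, ∑ n : Fin M, A i n * (Δy (M+1+k) * w (M+1+k) ((n:ℕ)+1)) := by
      refine (Summable.tsum_finsetSum fun n _ => ?_).symm
      exact (hsumm_w n).mul_left (A i n)
    rw [hswap]
    have hinner : ∀ k : ℕ, ∑ n : Fin M, A i n * (Δy (M+1+k) * w (M+1+k) ((n:ℕ)+1))
        = -(μ i ^ (M+1+k) / (((M+1+k).factorial : ℝ))) * Δy (M+1+k) := by
      intro k
      have h := congrFun (hmulvec (M+1+k) (by omega)) i
      simp only [Matrix.mulVec, dotProduct] at h
      calc ∑ n : Fin M, A i n * (Δy (M+1+k) * w (M+1+k) ((n:ℕ)+1))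
          = Δy (M+1+k) * ∑ n : Fin M, A i n * w (M+1+k) ((n:ℕ)+1) := by
            rw [Finset.mul_sum]
            exact Finset.sum_congr rfl fun n _ => by ring
        _ = -(μ i ^ (M+1+k) / (((M+1+k).factorial : ℝ))) * Δy (M+1+k) := by
            rw [h]; ring
    rw [tsum_congr hinner]
    have hneg : ∑' k : ℕ, -(μ i ^ (M+1+k) / (((M+1+k).factorial : ℝ))) * Δy (M+1+k)
        = -∑' k : ℕ, (μ i ^ (M+1+k) / (((M+1+k).factorial : ℝ))) * Δy (M+1+k) := by
      rw [← tsum_neg]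
      exact tsum_congr fun k => by ring
    rw [hneg]
    have hfinsum : ∑ n : Fin M, A i n * Δy ((n:ℕ)+1)
        = ∑ n ∈ Finset.range M, (μ i ^ (n + 1) / ((n + 1).factorial : ℝ)) * Δy (n + 1) := by
      exact Fin.sum_univ_eq_sum_range
        (fun n => (μ i ^ (n + 1) / ((n + 1).factorial : ℝ)) * Δy (n + 1)) M
    rw [hfinsum]
    have := hzero2 i
    linarith
  have hd := Matrix.eq_zero_of_mulVec_eq_zero hdet hmv
  have hdiff : ∀ n' : Fin M, Δy ((n':ℕ)+1)
      = ∑' k : ℕ, Δy (M+1+k) * w (M+1+k) ((n':ℕ)+1) := by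
    intro n'
    have h := congrFun hd n'
    simp only [Pi.zero_apply] at h
    linarith [h]
  constructor
  · intro n hn
    by_cases hle : n ≤ M
    · have h := hdiff ⟨n-1, by omega⟩
      simpa [show n-1+1 = n from by omega] using h
    · push_neg at hle
      exact (htail Δy n hle).symm
  · intro c hc m hm
    have h1 := hc m (by omega)
    rw [htail c m hm] at h1
    exact h1.symm
end

section
/- Let μ_1,...,μ_M be distinct positive reals and let (y_n)_{n≥1} with 0 ≤ y_n satisfy Q_+(μ_i) = e^{−μ_i} ∑_{n=1}^∞ (μ_i^n/n!) y_n for each i. Let (X_n)_{1≤n≤M} be the unique solution of the linear system ∑_{n=1}^M (μ_i^n/n!) X_n = e^{μ_i} Q_+(μ_i), i = 1,...,M. If M is even, then y_1 ≥ X_1. -/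
open Polynomial Finset

-- helper: division by product of monics
lemma divByMonic_mul_monic {F : Type*} [Field F] (f p q : F[X]) (hp : p.Monic) (hq : q.Monic) :
    f /ₘ (p * q) = f /ₘ p /ₘ q := by
  refine (Polynomial.div_modByMonic_unique (f /ₘ p /ₘ q) (p * ((f /ₘ p) %ₘ q) + f %ₘ p)
    (hp.mul hq) ⟨?_, ?_⟩).1
  · have h1 := Polynomial.modByMonic_add_div f p
    have h2 := Polynomial.modByMonic_add_div (f /ₘ p) q
    calc p * ((f /ₘ p) %ₘ q) + f %ₘ p + p * q * (f /ₘ p /ₘ q)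
        = f %ₘ p + p * ((f /ₘ p) %ₘ q + q * (f /ₘ p /ₘ q)) := by ring
      _ = f := by rw [h2, h1]
  · have hq0 : (0 : WithBot ℕ) ≤ q.degree := zero_le_degree_iff.2 hq.ne_zero
    have hpq : (p * q).degree = p.degree + q.degree := by
      rw [degree_mul]
    rw [hpq]
    refine lt_of_le_of_lt (degree_add_le _ _) (max_lt ?_ ?_)
    · rcases eq_or_ne ((f /ₘ p) %ₘ q) 0 with h | h
      · simp only [h, mul_zero, degree_zero]
        exact lt_of_lt_of_le (WithBot.bot_lt_coe 0) (by
          exact le_add_of_nonneg_of_le (zero_le_degree_iff.2 hp.ne_zero) hq0)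
      · rw [degree_mul]
        exact WithBot.add_lt_add_left (degree_ne_bot.2 hp.ne_zero)
          (degree_modByMonic_lt _ hq)
    · exact lt_of_lt_of_le (degree_modByMonic_lt f hp) (le_add_of_nonneg_right hq0)

-- helper: quotient by X - C a preserves nonneg coeffs
lemma coeff_divByMonic_X_sub_C_nonneg {f : ℝ[X]} {a : ℝ} (ha : 0 ≤ a)
    (hf : ∀ n, 0 ≤ f.coeff n) (n : ℕ) : 0 ≤ (f /ₘ (X - C a)).coeff n := by
  rw [Polynomial.coeff_divByMonic_X_sub_C]
  exact Finset.sum_nonneg fun i _ => mul_nonneg (pow_nonneg ha _) (hf i)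

-- helper: quotient by nodal preserves nonneg coeffs
lemma coeff_divByMonic_nodal_nonneg {ι : Type*} [DecidableEq ι] (s : Finset ι) (v : ι → ℝ)
    (hv : ∀ i ∈ s, 0 ≤ v i) {f : ℝ[X]} (hf : ∀ n, 0 ≤ f.coeff n) (n : ℕ) :
    0 ≤ (f /ₘ Lagrange.nodal s v).coeff n := by
  induction s using Finset.induction generalizing f n with
  | empty => simpa [Lagrange.nodal_empty, Polynomial.divByMonic_one] using hf n
  | @insert a s ha ih =>
      have hnodal : Lagrange.nodal (insert a s) v = (X - C (v a)) * Lagrange.nodal s v := by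
        rw [Lagrange.nodal_eq, Lagrange.nodal_eq, Finset.prod_insert ha]
      rw [hnodal, divByMonic_mul_monic _ _ _ (monic_X_sub_C _) Lagrange.nodal_monic]
      exact ih (fun i hi => hv i (Finset.mem_insert_of_mem hi))
        (coeff_divByMonic_X_sub_C_nonneg (hv a (Finset.mem_insert_self a s)) hf) n

section Interp
variable {M : ℕ} (μ : Fin M → ℝ)

/-- evaluation of a low-degree polynomial at 0 via Lagrange weights -/
lemma eval_zero_eq_sum (hinj : Function.Injective μ) {g : ℝ[X]} (hg : g.degree < M) :
    g.eval 0 = ∑ i : Fin M, g.eval (μ i) * (Lagrange.basis Finset.univ μ i).eval 0 := by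
  have hvs : Set.InjOn μ (Finset.univ : Finset (Fin M)) := hinj.injOn
  have h := Lagrange.eq_interpolate hvs (by simpa using hg)
  conv_lhs => rw [h]
  rw [Lagrange.interpolate_apply, Polynomial.eval_finset_sum]
  exact Finset.sum_congr rfl fun i _ => by rw [Polynomial.eval_mul, Polynomial.eval_C]

/-- Lemma A: for exponents below `M` the weights reproduce delta -/
lemma sum_weights_pow_lt (hinj : Function.Injective μ) {m : ℕ} (hm : m < M) :
    ∑ i : Fin M, (Lagrange.basis Finset.univ μ i).eval 0 * μ i ^ m
      = if m = 0 then 1 else 0 := by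
  have hg : (X ^ m : ℝ[X]).degree < M := by
    rw [Polynomial.degree_X_pow]
    exact_mod_cast hm
  have := eval_zero_eq_sum μ hinj hg
  simp only [Polynomial.eval_pow, Polynomial.eval_X] at this
  rw [show (∑ i : Fin M, (Lagrange.basis Finset.univ μ i).eval 0 * μ i ^ m)
      = ∑ i : Fin M, μ i ^ m * (Lagrange.basis Finset.univ μ i).eval 0 from
    Finset.sum_congr rfl fun i _ => mul_comm _ _, ← this]
  rcases Nat.eq_zero_or_pos m with h | h
  · simp [h]
  · simp [zero_pow h.ne', h.ne']

/-- Lemma B: for exponents ≥ M (M even, positive nodes) the weighted sum is ≤ 0 -/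
lemma sum_weights_pow_ge (hMeven : Even M) (hpos : ∀ i, 0 < μ i)
    (hinj : Function.Injective μ) {N : ℕ} (hN : M ≤ N) (hN1 : 1 ≤ N) :
    ∑ i : Fin M, (Lagrange.basis Finset.univ μ i).eval 0 * μ i ^ N ≤ 0 := by
  set nd : ℝ[X] := Lagrange.nodal Finset.univ μ with hnd
  set g : ℝ[X] := (X ^ N) %ₘ nd with hgdef
  set q : ℝ[X] := (X ^ N) /ₘ nd with hqdef
  have hmonic : nd.Monic := Lagrange.nodal_monic
  have hdegnd : nd.degree = (M : WithBot ℕ) := by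
    rw [Lagrange.degree_nodal]; simp
  have hgdeg : g.degree < M := by
    rw [← hdegnd]; exact Polynomial.degree_modByMonic_lt _ hmonic
  have hsplit : g = X ^ N - nd * q := Polynomial.modByMonic_eq_sub_mul_div _ _
  have heval : ∀ i, g.eval (μ i) = μ i ^ N := by
    intro i
    have : nd.eval (μ i) = 0 := by
      rw [Lagrange.eval_nodal]
      exact Finset.prod_eq_zero (Finset.mem_univ i) (by ring)
    simp [hsplit, this]
  have hkey := eval_zero_eq_sum μ hinj hgdeg
  have hsum : ∑ i : Fin M, (Lagrange.basis Finset.univ μ i).eval 0 * μ i ^ N = g.eval 0 := by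
    rw [hkey]
    exact Finset.sum_congr rfl fun i _ => by rw [heval i, mul_comm]
  rw [hsum, hsplit]
  have hnd0 : nd.eval 0 = ∏ i : Fin M, μ i := by
    rw [Lagrange.eval_nodal]
    have : ∀ i : Fin M, (0 : ℝ) - μ i = (-1) * μ i := fun i => by ring
    rw [Finset.prod_congr rfl fun i _ => this i, Finset.prod_mul_distrib,
      Finset.prod_const, Finset.card_univ, Fintype.card_fin, hMeven.neg_one_pow, one_mul]
  have hq0 : 0 ≤ q.eval 0 := by
    rw [← Polynomial.coeff_zero_eq_eval_zero]
    exact coeff_divByMonic_nodal_nonneg Finset.univ μ (fun i _ => (hpos i).le)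
      (fun n => by rw [Polynomial.coeff_X_pow]; positivity) 0
  have hprod : 0 < ∏ i : Fin M, μ i := Finset.prod_pos fun i _ => hpos i
  have : (X ^ N - nd * q).eval 0 = 0 - (∏ i : Fin M, μ i) * q.eval 0 := by
    rw [Polynomial.eval_sub, Polynomial.eval_mul, hnd0, Polynomial.eval_pow,
      Polynomial.eval_X, zero_pow (by omega : N ≠ 0)]
  rw [this]
  nlinarith
end Interp

/-- Decoy-state method, `M` even: if the nonnegative yields `(y n)_{n≥1}` reproduce
the observed rates `Q₊(μ i)` and `(X n)_{n=1}^M` is the solution of the truncated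
linear system, then `X 1` is a lower bound on `y 1`. -/
theorem X_one_le_y_one_of_even (M : ℕ) (hM : 0 < M) (hMeven : Even M)
    (μ : Fin M → ℝ) (hpos : ∀ i, 0 < μ i) (hinj : Function.Injective μ)
    (y : ℕ → ℝ) (hy : ∀ n, 1 ≤ n → 0 ≤ y n)
    (Qp : Fin M → ℝ)
    (hsum : ∀ i : Fin M, Summable fun n : ℕ => μ i ^ (n + 1) / ((n + 1).factorial : ℝ) * y (n + 1))
    (hQ : ∀ i : Fin M, Qp i =
      Real.exp (-μ i) * ∑' n : ℕ, μ i ^ (n + 1) / ((n + 1).factorial : ℝ) * y (n + 1))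
    (X : Fin M → ℝ)
    (hX : ∀ i : Fin M,
      ∑ n : Fin M, μ i ^ ((n : ℕ) + 1) / (((n : ℕ) + 1).factorial : ℝ) * X n =
        Real.exp (μ i) * Qp i) :
    X ⟨0, hM⟩ ≤ y 1 := by
  classical
  set b : Fin M → ℝ := fun i => (Lagrange.basis Finset.univ μ i).eval 0 with hb
  set c : Fin M → ℝ := fun i => b i / μ i with hc
  set f : Fin M → ℕ → ℝ := fun i n => μ i ^ (n + 1) / ((n + 1).factorial : ℝ) * y (n + 1)
    with hf
  -- step 1: full system equality
  have key : ∀ i : Fin M,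
      ∑ n : Fin M, μ i ^ ((n : ℕ) + 1) / (((n : ℕ) + 1).factorial : ℝ) * X n
        = ∑' n : ℕ, f i n := by
    intro i
    rw [hX i, hQ i, ← mul_assoc, ← Real.exp_add]
    simp
    rfl
  -- step 2: split tsum
  have hsplit : ∀ i : Fin M, ∑' n : ℕ, f i n
      = ∑ n ∈ Finset.range M, f i n + ∑' n : ℕ, f i (n + M) := by
    intro i
    exact (Summable.sum_add_tsum_nat_add M (hsum i)).symm
  -- step 3: per-i equation
  have E : ∀ i : Fin M,
      ∑ n : Fin M, μ i ^ ((n : ℕ) + 1) / (((n : ℕ) + 1).factorial : ℝ) * (X n - y ((n : ℕ) + 1))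
        = ∑' n : ℕ, f i (n + M) := by
    intro i
    have h1 : ∑ n ∈ Finset.range M, f i n
        = ∑ n : Fin M, μ i ^ ((n : ℕ) + 1) / (((n : ℕ) + 1).factorial : ℝ) * y ((n : ℕ) + 1) := by
      rw [← Fin.sum_univ_eq_sum_range (fun n => f i n) M]
    have := key i
    rw [hsplit i, h1] at this
    simp only [mul_sub, Finset.sum_sub_distrib]
    linarith
  -- tail summability
  have htail : ∀ i : Fin M, Summable fun n : ℕ => f i (n + M) :=
    fun i => (summable_nat_add_iff M).2 (hsum i)
  -- step 4: multiply by c and sum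
  have main : X ⟨0, hM⟩ - y 1 = ∑ i : Fin M, c i * ∑' n : ℕ, f i (n + M) := by
    rw [← Finset.sum_congr rfl fun i _ => congrArg (c i * ·) (E i)]
    simp only [Finset.mul_sum]
    rw [Finset.sum_comm]
    have inner : ∀ n : Fin M,
        ∑ i : Fin M, c i * (μ i ^ ((n : ℕ) + 1) / (((n : ℕ) + 1).factorial : ℝ)
          * (X n - y ((n : ℕ) + 1)))
        = (if (n : ℕ) = 0 then 1 else 0) / (((n : ℕ) + 1).factorial : ℝ)
          * (X n - y ((n : ℕ) + 1)) := by
      intro n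
      have : ∀ i : Fin M, c i * (μ i ^ ((n : ℕ) + 1) / (((n : ℕ) + 1).factorial : ℝ)
            * (X n - y ((n : ℕ) + 1)))
          = b i * μ i ^ (n : ℕ) / (((n : ℕ) + 1).factorial : ℝ) * (X n - y ((n : ℕ) + 1)) := by
        intro i
        have hμ : μ i ≠ 0 := (hpos i).ne'
        rw [hc]
        field_simp
        ring
      rw [Finset.sum_congr rfl fun i _ => this i, ← Finset.sum_mul, ← Finset.sum_div,
        sum_weights_pow_lt μ hinj n.2]
    rw [Finset.sum_congr rfl fun n _ => inner n]
    have hdelta : ∀ n : Fin M,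
        (if (n : ℕ) = 0 then (1:ℝ) else 0) / (((n : ℕ) + 1).factorial : ℝ)
          * (X n - y ((n : ℕ) + 1))
        = if n = ⟨0, hM⟩ then X ⟨0, hM⟩ - y 1 else 0 := by
      intro n
      by_cases h : n = ⟨0, hM⟩
      · subst h; simp
      · have h0 : (n : ℕ) ≠ 0 := fun h0 => h (Fin.ext h0)
        simp [h0, h]
    rw [Finset.sum_congr rfl fun n _ => hdelta n]
    simp
  -- step 5: RHS is nonpositive
  have hterm : ∀ n : ℕ, ∑ i : Fin M, c i * f i (n + M) ≤ 0 := by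
    intro n
    have hrw : ∀ i : Fin M, c i * f i (n + M)
        = b i * μ i ^ (n + M) * (y (n + M + 1) / ((n + M + 1).factorial : ℝ)) := by
      intro i
      have hμ : μ i ≠ 0 := (hpos i).ne'
      simp only [hf, hc]
      field_simp
      ring
    rw [Finset.sum_congr rfl fun i _ => hrw i, ← Finset.sum_mul]
    have hB := sum_weights_pow_ge μ hMeven hpos hinj (Nat.le_add_left M n)
      (by omega : 1 ≤ n + M)
    have hynn : 0 ≤ y (n + M + 1) / ((n + M + 1).factorial : ℝ) :=
      div_nonneg (hy _ (by omega)) (by positivity)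
    exact mul_nonpos_of_nonpos_of_nonneg hB hynn
  have hRHS : ∑ i : Fin M, c i * ∑' n : ℕ, f i (n + M) ≤ 0 := by
    have h1 : ∀ i : Fin M, c i * ∑' n : ℕ, f i (n + M) = ∑' n : ℕ, c i * f i (n + M) :=
      fun i => (tsum_mul_left).symm
    rw [Finset.sum_congr rfl fun i _ => h1 i,
      ← Summable.tsum_finsetSum (fun i _ => (htail i).mul_left (c i))]
    exact tsum_nonpos hterm
  linarith [main, hRHS]
end

section
/- Under the same setup, for any M and any 1 ≤ n ≤ M: if M − n is odd then y_n ≥ X_n, and if M − n is even then y_n ≤ X_n, for every nonnegative solution (y_k) of the constraints with y_k ≤ 1 for all k. -/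
set_option maxHeartbeats 1000000

open scoped Nat

noncomputable def Sfun (b : ℕ → ℝ) (x : ℝ) : ℝ := ∑' j, b j * x ^ j

def Adm (b : ℕ → ℝ) : Prop :=
  ∃ C q : ℝ, 0 ≤ C ∧ 1 ≤ q ∧ ∀ j, |b j| ≤ C * q ^ j / (j.factorial : ℝ)

lemma adm_summable {b : ℕ → ℝ} (hb : Adm b) (x : ℝ) :
    Summable (fun j => b j * x ^ j) := by
  obtain ⟨C, q, hC, hq, h⟩ := hb
  have hs : Summable (fun j : ℕ => C * ((q * |x|) ^ j / (j.factorial : ℝ))) :=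
    (Real.summable_pow_div_factorial (q * |x|)).mul_left C
  refine hs.of_norm_bounded fun j => ?_
  have h1 : ‖b j * x ^ j‖ = |b j| * |x| ^ j := by
    rw [norm_mul, Real.norm_eq_abs, Real.norm_eq_abs, abs_pow]
  rw [h1]
  calc |b j| * |x| ^ j ≤ (C * q ^ j / (j.factorial : ℝ)) * |x| ^ j :=
        mul_le_mul_of_nonneg_right (h j) (pow_nonneg (abs_nonneg x) j)
    _ = C * ((q * |x|) ^ j / (j.factorial : ℝ)) := by rw [mul_pow]; ring

lemma adm_Db {b : ℕ → ℝ} (hb : Adm b) : Adm (fun j => ((j : ℝ) + 1) * b (j + 1)) := by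
  obtain ⟨C, q, hC, hq, h⟩ := hb
  refine ⟨C * q, q, by positivity, hq, fun j => ?_⟩
  have hfac : ((j + 1).factorial : ℝ) = ((j : ℝ) + 1) * (j.factorial : ℝ) := by
    push_cast [Nat.factorial_succ]; ring
  have hj1 : (0 : ℝ) < (j : ℝ) + 1 := by positivity
  have := h (j + 1)
  rw [abs_mul, abs_of_pos hj1]
  calc ((j : ℝ) + 1) * |b (j + 1)| ≤ ((j : ℝ) + 1) * (C * q ^ (j + 1) / ((j + 1).factorial : ℝ)) :=
        mul_le_mul_of_nonneg_left this hj1.le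
    _ = C * q * q ^ j / (j.factorial : ℝ) := by
        rw [hfac]
        have : (j.factorial : ℝ) ≠ 0 := by positivity
        field_simp
        ring

lemma adm_sub {b : ℕ → ℝ} (hb : Adm b) (t : ℕ) : Adm (fun j => ((j : ℝ) - t) * b j) := by
  obtain ⟨C, q, hC, hq, h⟩ := hb
  refine ⟨C * (1 + t), 2 * q, by positivity, by linarith, fun j => ?_⟩
  have hkey : |(j : ℝ) - t| ≤ (1 + (t : ℝ)) * 2 ^ j := by
    have h2 : (j : ℝ) ≤ 2 ^ j := by
      exact_mod_cast (Nat.lt_two_pow_self (n := j)).le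
    have h3 : (1 : ℝ) ≤ 2 ^ j := one_le_pow₀ (by norm_num)
    rw [abs_sub_le_iff]
    constructor <;> nlinarith [Nat.cast_nonneg (α := ℝ) j, Nat.cast_nonneg (α := ℝ) t]
  rw [abs_mul]
  have hb' := h j
  have h0 : (0:ℝ) ≤ |b j| := abs_nonneg _
  have hq0 : (0:ℝ) ≤ q := by linarith
  calc |(j : ℝ) - t| * |b j| ≤ ((1 + (t : ℝ)) * 2 ^ j) * (C * q ^ j / (j.factorial : ℝ)) := by
        apply mul_le_mul hkey hb' h0 (by positivity)
    _ = C * (1 + t) * (2 * q) ^ j / (j.factorial : ℝ) := by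
        rw [mul_pow]; ring

lemma summable_deriv_terms {b : ℕ → ℝ} (hb : Adm b) (x : ℝ) :
    Summable (fun j : ℕ => (j : ℝ) * b j * x ^ (j - 1)) := by
  obtain ⟨C, q, hC, hq, h⟩ := hb
  set R := |x| + 1 with hR
  have hR1 : (1 : ℝ) ≤ R := by rw [hR]; linarith [abs_nonneg x]
  have hs : Summable (fun j : ℕ => C * ((2 * q * R) ^ j / (j.factorial : ℝ))) :=
    (Real.summable_pow_div_factorial (2 * q * R)).mul_left C
  refine hs.of_norm_bounded fun j => ?_
  have hxR : |x| ≤ R := by simp [hR]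
  have hq0 : (0:ℝ) ≤ q := by linarith
  rw [Real.norm_eq_abs, abs_mul, abs_mul, abs_pow, Nat.abs_cast]
  have hxp : |x| ^ (j - 1) ≤ R ^ j := by
    calc |x| ^ (j - 1) ≤ R ^ (j - 1) := pow_le_pow_left₀ (abs_nonneg x) hxR _
      _ ≤ R ^ j := pow_le_pow_right₀ hR1 (Nat.sub_le j 1)
  have hj2 : (j : ℝ) ≤ 2 ^ j := by exact_mod_cast (Nat.lt_two_pow_self (n := j)).le
  have hbj := h j
  have h1 : (j : ℝ) * |b j| * |x| ^ (j - 1) ≤ 2 ^ j * (C * q ^ j / (j.factorial : ℝ)) * R ^ j := by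
    apply mul_le_mul
    · apply mul_le_mul hj2 hbj (abs_nonneg _) (by positivity)
    · exact hxp
    · positivity
    · positivity
  calc (j : ℝ) * |b j| * |x| ^ (j - 1) ≤ 2 ^ j * (C * q ^ j / (j.factorial : ℝ)) * R ^ j := h1
    _ = C * ((2 * q * R) ^ j / (j.factorial : ℝ)) := by rw [mul_pow, mul_pow]; ring

lemma S_hasDerivAt {b : ℕ → ℝ} (hb : Adm b) (x : ℝ) :
    HasDerivAt (Sfun b) (Sfun (fun j => ((j : ℝ) + 1) * b (j + 1)) x) x := by
  obtain ⟨C, q, hC, hq, h⟩ := hb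
  set R := |x| + 1 with hR
  have hxR : x ∈ Metric.ball (0 : ℝ) R := by
    simp [Real.norm_eq_abs, hR]
  have hR1 : (1 : ℝ) ≤ R := by rw [hR]; linarith [abs_nonneg x]
  have hq0 : (0:ℝ) ≤ q := by linarith
  have hu : Summable (fun j : ℕ => C * ((2 * q * R) ^ j / (j.factorial : ℝ))) :=
    (Real.summable_pow_div_factorial (2 * q * R)).mul_left C
  have key : HasDerivAt (Sfun b) (∑' j : ℕ, (j : ℝ) * b j * x ^ (j - 1)) x := by
    have := hasDerivAt_tsum_of_isPreconnected (g := fun (j : ℕ) (y : ℝ) => b j * y ^ j)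
      (g' := fun (j : ℕ) (y : ℝ) => (j : ℝ) * b j * y ^ (j - 1))
      hu Metric.isOpen_ball (convex_ball (0:ℝ) R).isPreconnected
      ?_ ?_ (show (0:ℝ) ∈ Metric.ball (0:ℝ) R by simp [hR]; positivity) ?_ hxR
    · exact this
    · intro j y hy
      simpa [mul_comm, mul_assoc, mul_left_comm] using (hasDerivAt_pow j y).const_mul (b j)
    · intro j y hy
      have hyR : |y| ≤ R := by
        rw [Metric.mem_ball, Real.dist_eq, sub_zero] at hy; exact hy.le
      rw [Real.norm_eq_abs, abs_mul, abs_mul, abs_pow, Nat.abs_cast]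
      have hxp : |y| ^ (j - 1) ≤ R ^ j :=
        le_trans (pow_le_pow_left₀ (abs_nonneg y) hyR _) (pow_le_pow_right₀ hR1 (Nat.sub_le j 1))
      have hj2 : (j : ℝ) ≤ 2 ^ j := by exact_mod_cast (Nat.lt_two_pow_self (n := j)).le
      calc (j : ℝ) * |b j| * |y| ^ (j - 1)
          ≤ 2 ^ j * (C * q ^ j / (j.factorial : ℝ)) * R ^ j := by
            apply mul_le_mul
            · apply mul_le_mul hj2 (h j) (abs_nonneg _) (by positivity)
            · exact hxp
            · positivity
            · positivity
        _ = C * ((2 * q * R) ^ j / (j.factorial : ℝ)) := by rw [mul_pow, mul_pow]; ring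
    · exact adm_summable ⟨C, q, hC, hq, h⟩ 0
  have hshift : (∑' j : ℕ, (j : ℝ) * b j * x ^ (j - 1))
      = Sfun (fun j => ((j : ℝ) + 1) * b (j + 1)) x := by
    rw [Sfun]
    rw [Summable.tsum_eq_zero_add (summable_deriv_terms ⟨C, q, hC, hq, h⟩ x)]
    simp only [Nat.cast_zero, zero_mul, Nat.cast_succ, Nat.add_sub_cancel, zero_add]
  rwa [hshift] at key

lemma Sfun_sub_eq {b : ℕ → ℝ} (hb : Adm b) (t : ℕ) (x : ℝ) :
    Sfun (fun j => ((j : ℝ) - t) * b j) x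
      = x * Sfun (fun j => ((j : ℝ) + 1) * b (j + 1)) x - t * Sfun b x := by
  have hsb := adm_summable hb x
  have hsDb := adm_summable (adm_Db hb) x
  have hsj : Summable (fun j : ℕ => ((j : ℝ) * b j) * x ^ j) := by
    have := adm_summable (adm_sub hb 0) x
    simpa using this
  have hkey : Sfun (fun j => (j : ℝ) * b j) x
      = x * Sfun (fun j => ((j : ℝ) + 1) * b (j + 1)) x := by
    rw [Sfun, Sfun, Summable.tsum_eq_zero_add hsj, ← tsum_mul_left]
    simp only [Nat.cast_zero, zero_mul, zero_add, Nat.cast_succ]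
    exact tsum_congr fun j => by ring
  have h1 : Sfun (fun j => ((j : ℝ) - t) * b j) x
      = Sfun (fun j => (j : ℝ) * b j) x - t * Sfun b x := by
    rw [Sfun, Sfun, Sfun, ← tsum_mul_left, ← Summable.tsum_sub hsj (hsb.mul_left _)]
    exact tsum_congr fun j => by ring
  rw [h1, hkey]

lemma rolle_step {b : ℕ → ℝ} (hb : Adm b) (t : ℕ) {m : ℕ} (ρ : Fin (m + 1) → ℝ)
    (hmono : StrictMono ρ) (hpos : ∀ i, 0 < ρ i) (hz : ∀ i, Sfun b (ρ i) = 0) :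
    ∃ ξ : Fin m → ℝ, StrictMono ξ ∧ (∀ i, 0 < ξ i) ∧
      ∀ i, Sfun (fun j => ((j : ℝ) - t) * b j) (ξ i) = 0 := by
  set c : ℕ → ℝ := fun j => ((j : ℝ) - t) * b j with hc
  set H : ℝ → ℝ := fun x => Sfun b x * x ^ (-(t : ℤ)) with hH
  set H' : ℝ → ℝ := fun x => Sfun c x * x ^ (-(t : ℤ) - 1) with hH'
  have hderiv : ∀ x : ℝ, 0 < x → HasDerivAt H (H' x) x := by
    intro x hx
    have hx0 : x ≠ 0 := ne_of_gt hx
    have h1 := S_hasDerivAt hb x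
    have h2 : HasDerivAt (fun y : ℝ => y ^ (-(t : ℤ)))
        (((-(t : ℤ)) : ℝ) * x ^ (-(t : ℤ) - 1)) x := by
      exact_mod_cast hasDerivAt_zpow (-(t : ℤ)) x (Or.inl hx0)
    have h3 := h1.mul h2
    have heq : Sfun (fun j => ((j : ℝ) + 1) * b (j + 1)) x * x ^ (-(t : ℤ))
        + Sfun b x * (((-(t : ℤ)) : ℝ) * x ^ (-(t : ℤ) - 1)) = H' x := by
      have hxz : x ^ (-(t : ℤ)) = x * x ^ (-(t : ℤ) - 1) := by
        rw [← zpow_one_add₀ hx0]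
        norm_num
      show _ = Sfun c x * x ^ (-(t : ℤ) - 1)
      rw [hc, Sfun_sub_eq hb t x, hxz]
      push_cast
      ring
    rw [heq] at h3
    exact h3
  have hstep : ∀ i : Fin m, ∃ ξ, ξ ∈ Set.Ioo (ρ i.castSucc) (ρ i.succ) ∧ Sfun c ξ = 0 := by
    intro i
    have hab : ρ i.castSucc < ρ i.succ := hmono (Fin.castSucc_lt_succ (i := i))
    have hposa : 0 < ρ i.castSucc := hpos _
    have hcont : ContinuousOn H (Set.Icc (ρ i.castSucc) (ρ i.succ)) := by
      intro x hx
      exact (hderiv x (lt_of_lt_of_le hposa hx.1)).continuousAt.continuousWithinAt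
    have hHab : H (ρ i.castSucc) = H (ρ i.succ) := by
      show Sfun b _ * _ = Sfun b _ * _
      rw [hz i.castSucc, hz i.succ, zero_mul, zero_mul]
    obtain ⟨ξ, hξmem, hξ⟩ := exists_hasDerivAt_eq_zero hab hcont hHab
      (fun x hx => hderiv x (lt_trans hposa hx.1))
    refine ⟨ξ, hξmem, ?_⟩
    have hξpos : 0 < ξ := lt_trans hposa hξmem.1
    have : Sfun c ξ * ξ ^ (-(t : ℤ) - 1) = 0 := hξ
    rcases mul_eq_zero.mp this with h | h
    · exact h
    · exact absurd h (zpow_ne_zero _ (ne_of_gt hξpos))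
  choose ξ hξmem hξz using hstep
  refine ⟨ξ, ?_, fun i => lt_trans (hpos _) (hξmem i).1, hξz⟩
  intro i j hij
  have h1 : ξ i < ρ i.succ := (hξmem i).2
  have h2 : ρ j.castSucc < ξ j := (hξmem j).1
  have h3 : ρ i.succ ≤ ρ j.castSucc := hmono.monotone (by
    have : (i : ℕ) < (j : ℕ) := hij
    rw [Fin.le_def]
    simpa using this)
  linarith

lemma lemU : ∀ (m : ℕ) (b : ℕ → ℝ), Adm b → (∀ j, m ≤ j → 0 ≤ b j) →
    ∀ (ρ : Fin (m + 1) → ℝ), StrictMono ρ → (∀ i, 0 < ρ i) →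
    (∀ i, Sfun b (ρ i) = 0) → ∀ j, b j = 0 := by
  intro m
  induction m with
  | zero =>
    intro b hb hnn ρ _ hpos hz j
    have hsum := adm_summable hb (ρ 0)
    have hnn' : ∀ k, 0 ≤ b k * (ρ 0) ^ k :=
      fun k => mul_nonneg (hnn k (Nat.zero_le k)) (pow_nonneg (hpos 0).le k)
    have hle : b j * (ρ 0) ^ j ≤ ∑' k, b k * (ρ 0) ^ k :=
      Summable.le_tsum hsum j fun k _ => hnn' k
    have h0 : (∑' k, b k * (ρ 0) ^ k) = 0 := hz 0
    have : b j * (ρ 0) ^ j = 0 := le_antisymm (h0 ▸ hle) (hnn' j)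
    exact (mul_eq_zero.mp this).resolve_right (pow_ne_zero j (ne_of_gt (hpos 0)))
  | succ m ih =>
    intro b hb hnn ρ hmono hpos hz j
    obtain ⟨ξ, hξmono, hξpos, hξz⟩ := rolle_step hb m ρ hmono hpos hz
    have hc : ∀ k : ℕ, ((k : ℝ) - (m : ℝ)) * b k = 0 := by
      refine ih _ (adm_sub hb m) ?_ ξ hξmono hξpos hξz
      intro k hk
      rcases eq_or_lt_of_le hk with h | h
      · simp [← h]
      · have h1 : (0:ℝ) < (k : ℝ) - m := by
          have : (m : ℝ) < k := by exact_mod_cast h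
          linarith
        exact mul_nonneg h1.le (hnn k (by omega))
    have hbk : ∀ k, k ≠ m → b k = 0 := by
      intro k hk
      have := hc k
      rcases mul_eq_zero.mp this with h | h
      · exfalso
        apply hk
        exact_mod_cast sub_eq_zero.mp h
      · exact h
    have hbm : b m = 0 := by
      have hsingle : Sfun b (ρ 0) = b m * (ρ 0) ^ m := by
        rw [Sfun]
        exact tsum_eq_single m fun k hk => by rw [hbk k hk, zero_mul]
      have := (hz 0)
      rw [hsingle] at this
      exact (mul_eq_zero.mp this).resolve_right (pow_ne_zero m (ne_of_gt (hpos 0)))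
    rcases eq_or_ne j m with h | h
    · rw [h]; exact hbm
    · exact hbk j h

lemma lemR (n : ℕ) : ∀ (M : ℕ), n < M → ∀ (b : ℕ → ℝ), Adm b →
    0 < (-1 : ℝ) ^ (M + n + 1) * b n → (∀ j, M ≤ j → 0 ≤ b j) →
    ∀ (ρ : Fin M → ℝ), StrictMono ρ → (∀ i, 0 < ρ i) →
    (∀ i, Sfun b (ρ i) = 0) → False := by
  intro M
  induction M with
  | zero => omega
  | succ M ih =>
    intro hn b hb hsign htail ρ hmono hpos hz
    rcases eq_or_ne n M with hnM | hnM
    · -- base case: n = M, use lemU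
      subst hnM
      have hexp : (-1 : ℝ) ^ (n + 1 + n + 1) = 1 := by
        have : n + 1 + n + 1 = 2 * (n + 1) := by ring
        rw [this, pow_mul]
        norm_num
      rw [hexp, one_mul] at hsign
      have hall := lemU n b hb (fun j hj => by
        rcases eq_or_lt_of_le hj with h | h
        · rw [← h]; exact hsign.le
        · exact htail j h) ρ hmono hpos hz
      rw [hall n] at hsign
      exact lt_irrefl 0 hsign
    · have hn' : n < M := by omega
      obtain ⟨ξ, hξmono, hξpos, hξz⟩ := rolle_step hb M ρ hmono hpos hz
      refine ih hn' _ (adm_sub hb M) ?_ ?_ ξ hξmono hξpos hξz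
      · -- sign condition
        have h1 : (0:ℝ) < (M : ℝ) - n := by
          have : (n : ℝ) < M := by exact_mod_cast hn'
          linarith
        have h2 : (-1 : ℝ) ^ (M + n + 1) * (((n : ℝ) - M) * b n)
            = ((M : ℝ) - n) * ((-1 : ℝ) ^ (M + 1 + n + 1) * b n) := by
          have : (-1 : ℝ) ^ (M + 1 + n + 1) = (-1 : ℝ) ^ (M + n + 1) * (-1) := by
            rw [show M + 1 + n + 1 = (M + n + 1) + 1 by ring, pow_succ]
          rw [this]; ring
        rw [h2]
        exact mul_pos h1 hsign
      · intro j hj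
        rcases eq_or_lt_of_le hj with h | h
        · simp [← h]
        · have h1 : (0:ℝ) < (j : ℝ) - M := by
            have : (M : ℝ) < j := by exact_mod_cast h
            linarith
          exact mul_nonneg h1.le (htail j (by omega))



/-- Decoy-state method, general parity statement: for every `1 ≤ n ≤ M`, if `M - n`
is odd then `X n ≤ y n`, and if `M - n` is even then `y n ≤ X n`, for every solution
`(y k)` with `0 ≤ y k ≤ 1` of the decoy constraints. -/
theorem X_bounds_y (M : ℕ) (hM : 0 < M)
    (μ : Fin M → ℝ) (hpos : ∀ i, 0 < μ i) (hinj : Function.Injective μ)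
    (y : ℕ → ℝ) (hy : ∀ n, 1 ≤ n → 0 ≤ y n ∧ y n ≤ 1)
    (Qp : Fin M → ℝ)
    (hsum : ∀ i : Fin M, Summable fun n : ℕ => μ i ^ (n + 1) / ((n + 1).factorial : ℝ) * y (n + 1))
    (hQ : ∀ i : Fin M,
      ∑' n : ℕ, μ i ^ (n + 1) / ((n + 1).factorial : ℝ) * y (n + 1) =
        Real.exp (μ i) * Qp i)
    (X : Fin M → ℝ)
    (hX : ∀ i : Fin M,
      ∑ n : Fin M, μ i ^ ((n : ℕ) + 1) / (((n : ℕ) + 1).factorial : ℝ) * X n =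
        Real.exp (μ i) * Qp i) :
    ∀ n : Fin M,
      (Odd (M - ((n : ℕ) + 1)) → X n ≤ y ((n : ℕ) + 1)) ∧
      (Even (M - ((n : ℕ) + 1)) → y ((n : ℕ) + 1) ≤ X n) := by
  -- extended X
  set Xe : ℕ → ℝ := fun j => if h : j < M then X ⟨j, h⟩ else 0 with hXe
  set b : ℕ → ℝ := fun j => (y (j + 1) - Xe j) / ((j + 1).factorial : ℝ) with hb
  set B : ℝ := ∑ i : Fin M, |X i| with hB
  have hBnn : 0 ≤ B := Finset.sum_nonneg fun i _ => abs_nonneg _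
  -- admissibility
  have hAdm : Adm b := by
    refine ⟨1 + B, 1, by linarith, le_refl 1, fun j => ?_⟩
    have hy' := hy (j + 1) (by omega)
    have h1 : |y (j + 1)| ≤ 1 := abs_le.mpr ⟨by linarith [hy'.1], hy'.2⟩
    have h2 : |Xe j| ≤ B := by
      by_cases h : j < M
      · rw [hXe]
        simp only [dif_pos h]
        exact Finset.single_le_sum (f := fun i : Fin M => |X i|)
          (fun i _ => abs_nonneg _) (Finset.mem_univ (⟨j, h⟩ : Fin M))
      · rw [hXe]; simp only [dif_neg h, abs_zero]; exact hBnn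
    have hfj : (0:ℝ) < (j.factorial : ℝ) := by exact_mod_cast j.factorial_pos
    have hfj1 : (0:ℝ) < ((j+1).factorial : ℝ) := by exact_mod_cast (j+1).factorial_pos
    have hle : (j.factorial : ℝ) ≤ ((j + 1).factorial : ℝ) := by
      exact_mod_cast Nat.factorial_le (Nat.le_succ j)
    rw [hb]
    simp only [abs_div, abs_of_pos hfj1]
    have hnum : |y (j + 1) - Xe j| ≤ 1 + B := by
      calc |y (j + 1) - Xe j| ≤ |y (j + 1)| + |Xe j| := abs_sub _ _
        _ ≤ 1 + B := add_le_add h1 h2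
    calc |y (j + 1) - Xe j| / ((j+1).factorial : ℝ) ≤ (1 + B) / ((j+1).factorial : ℝ) := by
          gcongr
      _ ≤ (1 + B) / (j.factorial : ℝ) := by
          apply div_le_div_of_nonneg_left (by linarith) hfj hle
      _ = (1 + B) * 1 ^ j / (j.factorial : ℝ) := by rw [one_pow, mul_one]
  -- zeros
  have hzero : ∀ i : Fin M, Sfun b (μ i) = 0 := by
    intro i
    have hx : 0 < μ i := hpos i
    have hT1 : Summable (fun j : ℕ => μ i ^ (j + 1) / ((j + 1).factorial : ℝ) * y (j + 1)) :=
      hsum i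
    have hvan : ∀ j ∉ Finset.range M,
        μ i ^ (j + 1) / ((j + 1).factorial : ℝ) * Xe j = 0 := by
      intro j hj
      rw [Finset.mem_range, not_lt] at hj
      rw [hXe]
      simp only [dif_neg (not_lt.mpr hj), mul_zero]
    have hT2 : Summable (fun j : ℕ => μ i ^ (j + 1) / ((j + 1).factorial : ℝ) * Xe j) :=
      summable_of_ne_finset_zero hvan
    have hmul : ∀ j : ℕ, b j * μ i ^ j * μ i
        = μ i ^ (j + 1) / ((j + 1).factorial : ℝ) * y (j + 1)
          - μ i ^ (j + 1) / ((j + 1).factorial : ℝ) * Xe j := by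
      intro j
      have hfj1 : ((j+1).factorial : ℝ) ≠ 0 := by
        exact_mod_cast (j+1).factorial_pos.ne'
      rw [hb]
      field_simp
      ring
    have hT2eq : (∑' j, μ i ^ (j + 1) / ((j + 1).factorial : ℝ) * Xe j)
        = Real.exp (μ i) * Qp i := by
      rw [tsum_eq_sum hvan, ← Fin.sum_univ_eq_sum_range
        (fun j => μ i ^ (j + 1) / ((j + 1).factorial : ℝ) * Xe j) M, ← hX i]
      apply Finset.sum_congr rfl
      intro n _
      rw [hXe]
      simp only [dif_pos n.isLt, Fin.eta]
    have hfin : Sfun b (μ i) * μ i = 0 := by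
      rw [Sfun, ← tsum_mul_right, tsum_congr hmul, Summable.tsum_sub hT1 hT2, hQ i, hT2eq, sub_self]
    exact (mul_eq_zero.mp hfin).resolve_right (ne_of_gt hx)
  -- sorted zeros
  set σ := Tuple.sort μ with hσ
  have hρmono : StrictMono (μ ∘ σ) :=
    (Tuple.monotone_sort μ).strictMono_of_injective (hinj.comp σ.injective)
  have hρpos : ∀ i, 0 < (μ ∘ σ) i := fun i => hpos _
  have hρz : ∀ i, Sfun b ((μ ∘ σ) i) = 0 := fun i => hzero _
  -- main sign fact
  intro n
  have hbn : b (n : ℕ) = (y ((n : ℕ) + 1) - X n) / (((n : ℕ) + 1).factorial : ℝ) := by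
    rw [hb, hXe]
    simp only [dif_pos n.isLt, Fin.eta]
  have key : 0 ≤ (-1 : ℝ) ^ (M + (n : ℕ)) * (y ((n : ℕ) + 1) - X n) := by
    by_contra hcon
    push_neg at hcon
    have hfac : (0:ℝ) < (((n : ℕ) + 1).factorial : ℝ) := by
      exact_mod_cast ((n : ℕ) + 1).factorial_pos
    have hsign : 0 < (-1 : ℝ) ^ (M + (n : ℕ) + 1) * b (n : ℕ) := by
      rw [hbn, pow_succ]
      rw [show (-1 : ℝ) ^ (M + (n:ℕ)) * -1 * ((y ((n:ℕ)+1) - X n) / (((n:ℕ)+1).factorial : ℝ))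
          = -((-1 : ℝ) ^ (M + (n:ℕ)) * (y ((n:ℕ)+1) - X n)) / (((n:ℕ)+1).factorial : ℝ) by ring]
      apply div_pos (by linarith) hfac
    have htail : ∀ j, M ≤ j → 0 ≤ b j := by
      intro j hj
      rw [hb, hXe]
      simp only [dif_neg (not_lt.mpr hj), sub_zero]
      have := (hy (j + 1) (by omega)).1
      positivity
    exact lemR (n : ℕ) M n.isLt b hAdm hsign htail (μ ∘ σ) hρmono hρpos hρz
  have hsplit : M + (n : ℕ) = (M - ((n : ℕ) + 1)) + 2 * (n : ℕ) + 1 := by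
    have := n.isLt
    omega
  constructor
  · intro hodd
    have hpow : (-1 : ℝ) ^ (M + (n : ℕ)) = 1 := by
      rw [hsplit, pow_add, pow_add, pow_mul, hodd.neg_one_pow]
      norm_num
    rw [hpow, one_mul] at key
    linarith
  · intro heven
    have hpow : (-1 : ℝ) ^ (M + (n : ℕ)) = -1 := by
      rw [hsplit, pow_add, pow_add, pow_mul, heven.neg_one_pow]
      norm_num
    rw [hpow] at key
    linarith
end

section
/- The solution X_1 of the truncated system admits the closed form X_1 = ∑_{i=1}^M (e^{μ_i} Q_+(μ_i)/μ_i) ∏_{j≠i} μ_j/(μ_j − μ_i). -/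
open Polynomial Finset

/-- Closed (Lagrange-interpolation type) form for the first component of the
solution of the truncated decoy linear system:
`X 1 = ∑ i (e^{μ i} Q₊(μ i) / μ i) ∏_{j ≠ i} μ j / (μ j - μ i)`. -/
theorem X_one_closed_form (M : ℕ) (hM : 0 < M)
    (μ : Fin M → ℝ) (hpos : ∀ i, 0 < μ i) (hinj : Function.Injective μ)
    (Qp : Fin M → ℝ)
    (X : Fin M → ℝ)
    (hX : ∀ i : Fin M,
      ∑ n : Fin M, μ i ^ ((n : ℕ) + 1) / (((n : ℕ) + 1).factorial : ℝ) * X n =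
        Real.exp (μ i) * Qp i) :
    X ⟨0, hM⟩ = ∑ i : Fin M, Real.exp (μ i) * Qp i / μ i *
      ∏ j ∈ Finset.univ.erase i, μ j / (μ j - μ i) := by
  classical
  set g : ℝ[X] := ∑ n : Fin M, C (X n / (((n:ℕ)+1).factorial : ℝ)) * Polynomial.X ^ (n:ℕ)
    with hg
  have hdeg : g.degree < (Finset.univ : Finset (Fin M)).card := by
    rw [Finset.card_univ, Fintype.card_fin]
    refine lt_of_le_of_lt (degree_sum_le _ _) ?_
    rw [Finset.sup_lt_iff (by exact_mod_cast WithBot.bot_lt_coe M)]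
    intro n _
    refine lt_of_le_of_lt (degree_mul_le _ _) ?_
    refine lt_of_le_of_lt (add_le_add degree_C_le (degree_X_pow_le _)) ?_
    rw [zero_add]
    exact_mod_cast WithBot.coe_lt_coe.mpr n.2
  have heval : ∀ i : Fin M, g.eval (μ i) = Real.exp (μ i) * Qp i / μ i := by
    intro i
    have hμ : μ i ≠ 0 := ne_of_gt (hpos i)
    rw [eq_div_iff hμ]
    have : g.eval (μ i) * μ i
        = ∑ n : Fin M, μ i ^ ((n : ℕ) + 1) / (((n : ℕ) + 1).factorial : ℝ) * X n := by
      rw [hg, eval_finset_sum, Finset.sum_mul]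
      refine Finset.sum_congr rfl fun n _ => ?_
      simp [pow_succ]
      ring
    rw [this, hX i]
  have hzero : g.eval 0 = X ⟨0, hM⟩ := by
    rw [hg, eval_finset_sum]
    rw [Finset.sum_eq_single (⟨0, hM⟩ : Fin M)]
    · simp
    · intro n _ hn
      have : (n : ℕ) ≠ 0 := by
        intro h; exact hn (Fin.ext h)
      simp [zero_pow this]
    · simp
  have hinjOn : Set.InjOn μ (Finset.univ : Finset (Fin M)) := hinj.injOn
  have hrep := Lagrange.eq_interpolate hinjOn hdeg
  calc X ⟨0, hM⟩ = g.eval 0 := hzero.symm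
    _ = (Lagrange.interpolate Finset.univ μ fun i => g.eval (μ i)).eval 0 := by rw [← hrep]
    _ = _ := by
        rw [Lagrange.interpolate_apply, eval_finset_sum]
        refine Finset.sum_congr rfl fun i _ => ?_
        rw [eval_mul, eval_C, heval, Lagrange.basis, eval_prod]
        congr 1
        refine Finset.prod_congr rfl fun j hj => ?_
        rw [Lagrange.basisDivisor, eval_mul, eval_C, eval_sub, eval_X, eval_C]
        rw [← neg_div_neg_eq]
        ring_nf
end

section
/- For M = 2, n = 1, and 0 < μ_1, μ_2 ≤ 1, one has I_1 = ∑_{m=3}^∞ (q_m/m!) s_{(m−2,1)}(μ_1,μ_2) ≤ Aη + B, where q_m = A(1−(1−η)^m) + B. -/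
lemma mem_yc (k : ℕ) (c : ℕ × ℕ) :
    c ∈ youngCells [k + 1, 1] ↔ (c.1 = 0 ∧ c.2 < k + 1) ∨ (c.1 = 1 ∧ c.2 = 0) := by
  simp only [youngCells, Finset.mem_biUnion, Finset.mem_product, Finset.mem_range,
    Finset.mem_singleton, List.length_cons, List.length_nil]
  constructor
  · rintro ⟨i, hi, h1, h2⟩
    interval_cases i <;> simp_all
  · rintro (⟨h1, h2⟩ | ⟨h1, h2⟩)
    · exact ⟨0, by omega, h1, by simpa using h2⟩
    · exact ⟨1, by omega, h1, by simp [h2]⟩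

section Comb

variable (k : ℕ)

def cell0 (j : ℕ) (hj : j < k + 1) : (youngCells [k + 1, 1] : Finset (ℕ × ℕ)) :=
  ⟨(0, j), (mem_yc k _).mpr (Or.inl ⟨rfl, hj⟩)⟩

def cell1 : (youngCells [k + 1, 1] : Finset (ℕ × ℕ)) :=
  ⟨(1, 0), (mem_yc k _).mpr (Or.inr ⟨rfl, rfl⟩)⟩

def P (T : youngCells [k + 1, 1] → Fin 2) : Prop :=
  (∀ c c' : youngCells [k + 1, 1],
      (c : ℕ × ℕ).1 = (c' : ℕ × ℕ).1 → (c : ℕ × ℕ).2 + 1 = (c' : ℕ × ℕ).2 → T c ≤ T c') ∧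
  (∀ c c' : youngCells [k + 1, 1],
      (c : ℕ × ℕ).1 + 1 = (c' : ℕ × ℕ).1 → (c : ℕ × ℕ).2 = (c' : ℕ × ℕ).2 → T c < T c')

variable {k}

lemma fin2_lt {a b : Fin 2} (h : a < b) : a = 0 ∧ b = 1 := by
  have ha := a.isLt; have hb := b.isLt
  rw [Fin.lt_def] at h
  constructor <;> · apply Fin.ext; omega

lemma P_cell1 {T} (hT : P k T) : T (cell1 k) = 1 :=
  (fin2_lt (hT.2 (cell0 k 0 (Nat.succ_pos _)) (cell1 k) rfl rfl)).2

lemma P_cell0_zero {T} (hT : P k T) : T (cell0 k 0 (Nat.succ_pos _)) = 0 :=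
  (fin2_lt (hT.2 (cell0 k 0 (Nat.succ_pos _)) (cell1 k) rfl rfl)).1

lemma P_mono {T} (hT : P k T) (i j : ℕ) (hij : i ≤ j) (hj : j < k + 1) :
    T (cell0 k i (lt_of_le_of_lt hij hj)) ≤ T (cell0 k j hj) := by
  induction j with
  | zero =>
      obtain rfl := Nat.le_zero.mp hij
      exact le_refl _
  | succ n ih =>
    rcases Nat.eq_or_lt_of_le hij with rfl | hlt
    · exact le_refl _
    · have hn : n < k + 1 := Nat.lt_of_succ_lt hj
      exact le_trans (ih (Nat.lt_succ_iff.mp hlt) hn)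
        (hT.1 (cell0 k n hn) (cell0 k (n+1) hj) rfl rfl)

def zset (T : youngCells [k + 1, 1] → Fin 2) : Finset (youngCells [k + 1, 1]) :=
  Finset.univ.filter fun c => T c = 0

def gfun (T : youngCells [k + 1, 1] → Fin 2) : ℕ := (zset T).card

lemma zset_mem {T} (hT : P k T) {c} (hc : c ∈ zset T) :
    (c : ℕ × ℕ).1 = 0 ∧ (c : ℕ × ℕ).2 < k + 1 := by
  simp only [zset, Finset.mem_filter] at hc
  rcases (mem_yc k c).mp c.2 with h | h
  · exact h
  · exfalso
    have : c = cell1 k := Subtype.ext (Prod.ext h.1 h.2)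
    rw [this, P_cell1 hT] at hc
    exact absurd hc.2 (by decide)

-- downward-closed finsets of ℕ are ranges
lemma dc_eq_range (S : Finset ℕ) (h : ∀ j ∈ S, ∀ i ≤ j, i ∈ S) :
    S = Finset.range S.card := by
  ext j
  simp only [Finset.mem_range]
  constructor
  · intro hj
    have : Finset.range (j + 1) ⊆ S := fun i hi =>
      h j hj i (Nat.lt_succ_iff.mp (Finset.mem_range.mp hi))
    have := Finset.card_le_card this
    simpa using this
  · intro hj
    by_contra hns
    have hsub : S ⊆ Finset.range j := by
      intro s hs
      rw [Finset.mem_range]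
      by_contra hsj
      exact hns (h s hs j (Nat.le_of_not_lt hsj))
    have := Finset.card_le_card hsub
    simp at this; omega

def sset (T : youngCells [k + 1, 1] → Fin 2) : Finset ℕ :=
  (zset T).image fun c => c.val.2

lemma sset_card {T} (hT : P k T) : (sset (k := k) T).card = gfun T := by
  apply Finset.card_image_of_injOn
  intro c hc c' hc' h
  exact Subtype.ext (Prod.ext ((zset_mem hT hc).1.trans (zset_mem hT hc').1.symm) h)

lemma sset_mem {T} (hT : P k T) (j : ℕ) :
    j ∈ sset (k := k) T ↔ ∃ hj : j < k + 1, T (cell0 k j hj) = 0 := by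
  simp only [sset, Finset.mem_image]
  constructor
  · rintro ⟨c, hc, rfl⟩
    obtain ⟨h1, h2⟩ := zset_mem hT hc
    refine ⟨h2, ?_⟩
    have : c = cell0 k _ h2 := Subtype.ext (Prod.ext h1 rfl)
    rw [← this]
    exact (Finset.mem_filter.mp hc).2
  · rintro ⟨hj, hT0⟩
    exact ⟨cell0 k j hj, Finset.mem_filter.mpr ⟨Finset.mem_univ _, hT0⟩, rfl⟩

lemma sset_eq_range {T} (hT : P k T) : sset (k := k) T = Finset.range (gfun T) := by
  rw [← sset_card hT]
  apply dc_eq_range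
  intro j hj i hij
  obtain ⟨hjlt, hj0⟩ := (sset_mem hT j).mp hj
  refine (sset_mem hT i).mpr ⟨lt_of_le_of_lt hij hjlt, ?_⟩
  have := P_mono hT i j hij hjlt
  rw [hj0] at this
  exact Fin.le_zero_iff.mp this

lemma key_iff {T} (hT : P k T) (j : ℕ) (hj : j < k + 1) :
    T (cell0 k j hj) = 0 ↔ j < gfun T := by
  rw [← Finset.mem_range, ← sset_eq_range hT, sset_mem hT]
  exact ⟨fun h => ⟨hj, h⟩, fun ⟨_, h⟩ => h⟩

lemma gfun_mem {T} (hT : P k T) : gfun T ∈ Finset.Icc 1 (k + 1) := by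
  rw [Finset.mem_Icc]
  constructor
  · have := (key_iff hT 0 (Nat.succ_pos _)).mp (P_cell0_zero hT)
    omega
  · have hsub : Finset.range (gfun T) ⊆ Finset.range (k + 1) := by
      rw [← sset_eq_range hT]
      intro j hj
      obtain ⟨hjlt, _⟩ := (sset_mem hT j).mp hj
      exact Finset.mem_range.mpr hjlt
    simpa using Finset.card_le_card hsub

end Comb

open scoped Classical

section Comb2

variable {k : ℕ}

lemma fin2_ne_zero {a : Fin 2} (h : ¬ a = 0) : a = 1 := by
  have := a.isLt
  apply Fin.ext
  rw [Fin.ext_iff] at h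
  simp at h ⊢
  omega

lemma P_injOn {T T' : youngCells [k + 1, 1] → Fin 2} (hT : P k T) (hT' : P k T')
    (h : gfun T = gfun T') : T = T' := by
  funext c
  rcases (mem_yc k c.val).mp c.2 with ⟨h1, h2⟩ | ⟨h1, h2⟩
  · have hc : c = cell0 k c.val.2 h2 := Subtype.ext (Prod.ext h1 rfl)
    rw [hc]
    by_cases h0 : T (cell0 k c.val.2 h2) = 0
    · rw [h0]
      exact ((key_iff hT' _ h2).mpr (h ▸ (key_iff hT _ h2).mp h0)).symm
    · rw [fin2_ne_zero h0]
      refine (fin2_ne_zero fun h0' => h0 ?_).symm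
      exact (key_iff hT _ h2).mpr (h ▸ (key_iff hT' _ h2).mp h0')
  · have hc : c = cell1 k := Subtype.ext (Prod.ext h1 h2)
    rw [hc, P_cell1 hT, P_cell1 hT']

lemma card_P_le : (Finset.univ.filter (P k)).card ≤ k + 1 := by
  have := Finset.card_le_card_of_injOn (f := fun T => gfun (k := k) T)
    (s := Finset.univ.filter (P k)) (t := Finset.Icc 1 (k + 1))
    (fun T hT => gfun_mem (Finset.mem_filter.mp hT).2)
    (fun T hT T' hT' h =>
      P_injOn (Finset.mem_filter.mp hT).2 (Finset.mem_filter.mp hT').2 h)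
  simpa using this

lemma schur_nonneg (μ : Fin 2 → ℝ) (hμ0 : ∀ i, 0 ≤ μ i) :
    0 ≤ schur 2 μ [k + 1, 1] := by
  apply Finset.sum_nonneg
  intro T _
  split_ifs
  · exact Finset.prod_nonneg fun c _ => hμ0 _
  · exact le_refl 0

lemma schur_le (μ : Fin 2 → ℝ) (hμ0 : ∀ i, 0 ≤ μ i) (hμ1 : ∀ i, μ i ≤ 1) :
    schur 2 μ [k + 1, 1] ≤ (k + 1 : ℝ) := by
  have heq : schur 2 μ [k + 1, 1] = ∑ T : youngCells [k + 1, 1] → Fin 2,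
      if P k T then ∏ c : youngCells [k + 1, 1], μ (T c) else 0 := by
    rw [schur]
    exact Finset.sum_congr rfl fun T _ => if_congr Iff.rfl rfl rfl
  have h1 : schur 2 μ [k + 1, 1] ≤ ∑ T : youngCells [k + 1, 1] → Fin 2,
      if P k T then (1 : ℝ) else 0 := by
    rw [heq]
    apply Finset.sum_le_sum
    intro T _
    by_cases h : P k T
    · rw [if_pos h, if_pos h]
      exact Finset.prod_le_one (fun c _ => hμ0 _) (fun c _ => hμ1 _)
    · rw [if_neg h, if_neg h]
  rw [Finset.sum_boole] at h1
  refine h1.trans ?_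
  exact_mod_cast Nat.cast_le.mpr (card_P_le (k := k))

end Comb2

/-- For `M = 2`, `n = 1` and `0 < μ₁, μ₂ ≤ 1`:
`I₁ = ∑_{m=3}^∞ (q m / m!) s_{(m-2,1)}(μ₁,μ₂) ≤ A η + B` (and the series converges). -/
theorem I_one_le_two_decoys (μ₁ μ₂ : ℝ) (h1 : 0 < μ₁) (h1' : μ₁ ≤ 1)
    (h2 : 0 < μ₂) (h2' : μ₂ ≤ 1)
    (A B η : ℝ) (hA0 : 0 ≤ A) (hA1 : A ≤ 1) (hB0 : 0 ≤ B) (hη0 : 0 ≤ η) (hη1 : η ≤ 1)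
    (q : ℕ → ℝ) (hq : ∀ m, q m = A * (1 - (1 - η) ^ m) + B) :
    (Summable fun k : ℕ => q (3 + k) / ((3 + k).factorial : ℝ) *
        schur 2 ![μ₁, μ₂] [k + 1, 1]) ∧
    (∑' k : ℕ, q (3 + k) / ((3 + k).factorial : ℝ) *
        schur 2 ![μ₁, μ₂] [k + 1, 1]) ≤ A * η + B := by
  have hμ0 : ∀ i : Fin 2, 0 ≤ ![μ₁, μ₂] i := by
    intro i; fin_cases i <;> simp [le_of_lt h1, le_of_lt h2]
  have hμ1 : ∀ i : Fin 2, ![μ₁, μ₂] i ≤ 1 := by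
    intro i; fin_cases i <;> simpa
  set f : ℕ → ℝ := fun k => q (3 + k) / ((3 + k).factorial : ℝ) *
      schur 2 ![μ₁, μ₂] [k + 1, 1] with hfdef
  have hAB : 0 ≤ A * η + B := by positivity
  have hqpos : ∀ m, 0 ≤ q m := by
    intro m
    rw [hq]
    have h : (1 - η) ^ m ≤ 1 := pow_le_one₀ (by linarith) (by linarith)
    have : 0 ≤ A * (1 - (1 - η) ^ m) := mul_nonneg hA0 (by linarith)
    linarith
  have hqle : ∀ m : ℕ, 1 ≤ m → q m ≤ m * (A * η + B) := by
    intro m hm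
    rw [hq]
    have hb : 1 + (m : ℝ) * (-η) ≤ (1 + (-η)) ^ m := one_add_mul_le_pow (by linarith) m
    have hb' : 1 - (1 - η) ^ m ≤ m * η := by
      have : (1 : ℝ) + (-η) = 1 - η := by ring
      rw [this] at hb; linarith
    have hm1 : (1 : ℝ) ≤ m := by exact_mod_cast hm
    have h1m : A * (1 - (1 - η) ^ m) ≤ A * (m * η) :=
      mul_le_mul_of_nonneg_left hb' hA0
    nlinarith [mul_nonneg hB0 (sub_nonneg.mpr hm1)]
  set G : ℕ → ℝ := fun k => 1 / ((k + 1).factorial : ℝ) with hGdef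
  have hGpos : ∀ k, 0 ≤ G k := fun k => by positivity
  have hG0 : G 0 = 1 := by norm_num [hGdef]
  have hfnonneg : ∀ k, 0 ≤ f k := fun k =>
    mul_nonneg (div_nonneg (hqpos _) (by positivity)) (schur_nonneg _ hμ0)
  have hfle : ∀ k, f k ≤ (A * η + B) * (G k - G (k + 1)) := by
    intro k
    have hfac3 : ((3 + k).factorial : ℝ) = (3 + k) * ((k + 1 + 1).factorial : ℝ) := by
      rw [show 3 + k = (k + 1 + 1) + 1 by omega]
      push_cast [Nat.factorial_succ]
      ring
    have hfac2 : ((k + 1 + 1).factorial : ℝ) = (k + 1 + 1) * ((k + 1).factorial : ℝ) := by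
      push_cast [Nat.factorial_succ]; ring
    have hfacpos : (0 : ℝ) < ((k + 1).factorial : ℝ) := by positivity
    have step1 : f k ≤ q (3 + k) / ((3 + k).factorial : ℝ) * (k + 1) := by
      apply mul_le_mul_of_nonneg_left (schur_le _ hμ0 hμ1)
      exact div_nonneg (hqpos _) (by positivity)
    have step2 : q (3 + k) / ((3 + k).factorial : ℝ) * (k + 1) ≤
        ((3 + k : ℕ) : ℝ) * (A * η + B) / ((3 + k).factorial : ℝ) * (k + 1) := by
      apply mul_le_mul_of_nonneg_right _ (by positivity)
      apply div_le_div_of_nonneg_right _ (by positivity)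
      · exact hqle (3 + k) (by omega)
    have step3 : ((3 + k : ℕ) : ℝ) * (A * η + B) / ((3 + k).factorial : ℝ) * (k + 1) =
        (A * η + B) * (G k - G (k + 1)) := by
      have hGk : G k = 1 / ((k + 1).factorial : ℝ) := rfl
      have hGk1 : G (k + 1) = 1 / ((k + 1 + 1).factorial : ℝ) := rfl
      rw [hGk, hGk1, hfac3, hfac2]
      push_cast
      field_simp
      ring
    calc f k ≤ _ := step1
      _ ≤ _ := step2
      _ = _ := step3
  have hGsummable : Summable G := by
    have h := Real.summable_pow_div_factorial 1
    have h' := (summable_nat_add_iff 1).mpr h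
    simpa [hGdef] using h'
  have hsummable : Summable f := by
    apply Summable.of_nonneg_of_le hfnonneg
      (fun k => (hfle k).trans (by nlinarith [hGpos k, hGpos (k + 1)]))
      (hGsummable.mul_left (A * η + B))
  refine ⟨hsummable, ?_⟩
  apply Summable.tsum_le_of_sum_range_le hsummable
  intro n
  calc ∑ i ∈ Finset.range n, f i
      ≤ ∑ i ∈ Finset.range n, (A * η + B) * (G i - G (i + 1)) :=
        Finset.sum_le_sum fun i _ => hfle i
    _ = (A * η + B) * (G 0 - G n) := by
        rw [← Finset.mul_sum, Finset.sum_range_sub' G n]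
    _ ≤ (A * η + B) * 1 := by
        apply mul_le_mul_of_nonneg_left _ hAB
        have := hGpos n; linarith [hG0]
    _ = A * η + B := mul_one _
end

section
/- Let 0 < μ_1,...,μ_M ≤ 1, q_n = A(1−(1−η)^n)+B with 0 < A ≤ 1, 0 ≤ B ≤ η, and X_M as in the truncated system. If (L_0, a_0) with L_0 > M and 0 < a_0 ≤ 1 satisfies X_M/M! = (a_0/L_0!) s_{(L_0−M)}(μ) + ∑_{m=L_0+1}^∞ (1/m!) s_{(m−M)}(μ), then L_0 (L_0 − M)! ≤ M e / q_M. -/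
noncomputable def Sdd (n : ℕ) (s : Finset ℝ) : ℝ :=
  ∑ x ∈ s, x ^ n * (∏ y ∈ s.erase x, (x - y))⁻¹

lemma Sdd_rec (n : ℕ) (s : Finset ℝ) (y : ℝ) (hy : y ∈ s) :
    Sdd (n + 1) s = y * Sdd n s + Sdd n (s.erase y) := by
  have key : Sdd (n + 1) s - y * Sdd n s = Sdd n (s.erase y) := by
    unfold Sdd
    rw [Finset.mul_sum, ← Finset.sum_sub_distrib]
    have hsplit : ∀ x ∈ s, x ^ (n+1) * (∏ z ∈ s.erase x, (x - z))⁻¹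
        - y * (x ^ n * (∏ z ∈ s.erase x, (x - z))⁻¹)
        = x ^ n * (x - y) * (∏ z ∈ s.erase x, (x - z))⁻¹ := by
      intro x hx; ring
    rw [Finset.sum_congr rfl hsplit]
    rw [← Finset.add_sum_erase _ _ hy]
    have h0 : y ^ n * (y - y) * (∏ z ∈ s.erase y, (y - z))⁻¹ = 0 := by ring_nf
    rw [h0, zero_add]
    apply Finset.sum_congr rfl
    intro x hx
    have hxy : x ≠ y := Finset.ne_of_mem_erase hx
    have hxs : x ∈ s := Finset.mem_of_mem_erase hx
    have hyx : y ∈ s.erase x := Finset.mem_erase.2 ⟨Ne.symm hxy, hy⟩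
    have hprod : ∏ z ∈ s.erase x, (x - z) = (x - y) * ∏ z ∈ (s.erase x).erase y, (x - z) :=
      (Finset.mul_prod_erase _ _ hyx).symm
    rw [hprod, mul_inv, Finset.erase_right_comm]
    have : (x - y) ≠ 0 := sub_ne_zero.2 hxy
    rw [mul_assoc, ← mul_assoc (x - y), mul_inv_cancel₀ this, one_mul]
  linarith

lemma Sdd_delta : ∀ (m : ℕ) (s : Finset ℝ), s.card = m + 1 → ∀ n ≤ m,
    Sdd n s = if n = m then 1 else 0 := by
  intro m
  induction m with
  | zero =>
    intro s hs n hn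
    interval_cases n
    obtain ⟨x, rfl⟩ := Finset.card_eq_one.1 hs
    simp [Sdd]
  | succ m ih =>
    intro s hs n hn
    have hzero : ∀ k ≤ m, Sdd k s = 0 := by
      intro k hk
      have h2 : 1 < s.card := by omega
      obtain ⟨a, ha, b, hb, hab⟩ := Finset.one_lt_card.1 h2
      have ra := Sdd_rec k s a ha
      have rb := Sdd_rec k s b hb
      have ca : (s.erase a).card = m + 1 := by rw [Finset.card_erase_of_mem ha]; omega
      have cb : (s.erase b).card = m + 1 := by rw [Finset.card_erase_of_mem hb]; omega
      have ea := ih (s.erase a) ca k hk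
      have eb := ih (s.erase b) cb k hk
      have : a * Sdd k s = b * Sdd k s := by
        have h3 := ra.symm.trans rb
        rw [ea, eb] at h3; linarith
      have hab' : a - b ≠ 0 := sub_ne_zero.2 hab
      have : (a - b) * Sdd k s = 0 := by ring_nf; linarith
      rcases mul_eq_zero.1 this with h | h
      · exact absurd h hab'
      · exact h
    rcases eq_or_lt_of_le hn with rfl | hlt
    · have hne : s.Nonempty := by rw [← Finset.card_pos, hs]; omega
      obtain ⟨y, hy⟩ := hne
      have r := Sdd_rec m s y hy
      have cy : (s.erase y).card = m + 1 := by rw [Finset.card_erase_of_mem hy]; omega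
      have := ih (s.erase y) cy m le_rfl
      norm_num at this
      rw [r, this, hzero m le_rfl, if_pos rfl]
      ring
    · rw [hzero n (by omega), if_neg (by omega)]

lemma Sdd_nonneg : ∀ (n : ℕ) (s : Finset ℝ), (∀ x ∈ s, 0 ≤ x) → s.card ≤ n + 1 →
    0 ≤ Sdd n s := by
  intro n
  induction n with
  | zero =>
    intro s hx hc
    interval_cases h : s.card
    · rw [Finset.card_eq_zero.1 h]; simp [Sdd]
    · rw [Sdd_delta 0 s h 0 le_rfl]; norm_num
  | succ n ih =>
    intro s hx hc
    rcases Finset.eq_empty_or_nonempty s with rfl | ⟨y, hy⟩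
    · simp [Sdd]
    rcases eq_or_lt_of_le hc with hcard | hcard
    · rw [Sdd_delta (n+1) s hcard (n+1) le_rfl, if_pos rfl]; norm_num
    · rw [Sdd_rec n s y hy]
      have h1 := ih s hx (by omega)
      have h2 := ih (s.erase y) (fun x hxe => hx x (Finset.mem_of_mem_erase hxe))
        (by rw [Finset.card_erase_of_mem hy]; omega)
      have := hx y hy
      positivity


lemma summable_inv_fact : Summable (fun t : ℕ => (1:ℝ) / t.factorial) := by
  have := Real.summable_pow_div_factorial 1
  simpa using this

lemma tsum_inv_fact : ∑' t : ℕ, (1:ℝ) / t.factorial = Real.exp 1 := by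
  rw [Real.exp_eq_exp_ℝ, NormedSpace.exp_eq_tsum_div]
  simp

lemma fact_add_ge (c t : ℕ) : (c.factorial * t.factorial : ℝ) ≤ ((c + t).factorial : ℝ) := by
  exact_mod_cast Nat.le_of_dvd (c + t).factorial_pos
    (Nat.factorial_mul_factorial_dvd_factorial_add c t)

lemma inv_fact_add_le (c t : ℕ) :
    (1:ℝ) / ((c + t).factorial : ℝ) ≤ 1 / (c.factorial : ℝ) * (1 / (t.factorial : ℝ)) := by
  rw [div_mul_div_comm, one_mul]
  apply one_div_le_one_div_of_le
  · positivity
  · exact fact_add_ge c t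

lemma summable_inv_fact_add (c : ℕ) : Summable (fun t : ℕ => (1:ℝ) / ((c + t).factorial : ℝ)) := by
  apply Summable.of_nonneg_of_le (fun t => by positivity) (inv_fact_add_le c)
  exact (summable_inv_fact.mul_left _)

lemma tsum_inv_fact_add_le (c : ℕ) :
    ∑' t : ℕ, (1:ℝ) / ((c + t).factorial : ℝ) ≤ Real.exp 1 / (c.factorial : ℝ) := by
  calc ∑' t : ℕ, (1:ℝ) / ((c + t).factorial : ℝ)
      ≤ ∑' t : ℕ, 1 / (c.factorial : ℝ) * (1 / (t.factorial : ℝ)) :=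
        Summable.tsum_le_tsum (inv_fact_add_le c) (summable_inv_fact_add c) (summable_inv_fact.mul_left _)
    _ = 1 / (c.factorial : ℝ) * Real.exp 1 := by rw [tsum_mul_left, tsum_inv_fact]
    _ = Real.exp 1 / (c.factorial : ℝ) := by ring


lemma XM_ge (M : ℕ) (hM : 0 < M) (μ : Fin M → ℝ)
    (hpos : ∀ i, 0 < μ i) (hle : ∀ i, μ i ≤ 1) (hinj : Function.Injective μ)
    (q : ℕ → ℝ) (hq0 : ∀ n : ℕ, 0 ≤ q (n + 1)) (hq2 : ∀ n : ℕ, q (n + 1) ≤ 2)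
    (X : Fin M → ℝ)
    (hX : ∀ i : Fin M,
      ∑ n : Fin M, μ i ^ ((n : ℕ) + 1) / (((n : ℕ) + 1).factorial : ℝ) * X n =
        ∑' n : ℕ, μ i ^ (n + 1) / ((n + 1).factorial : ℝ) * q (n + 1)) :
    q M / (M.factorial : ℝ) ≤ X ⟨M - 1, by omega⟩ / (M.factorial : ℝ) := by
  classical
  set s : Finset ℝ := insert 0 (Finset.univ.image μ) with hs
  have h0nim : (0 : ℝ) ∉ Finset.univ.image μ := by
    intro h
    obtain ⟨i, -, hi⟩ := Finset.mem_image.1 h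
    exact (hpos i).ne' hi
  have hcard : s.card = M + 1 := by
    rw [hs, Finset.card_insert_of_notMem h0nim,
      Finset.card_image_of_injective _ hinj, Finset.card_univ, Fintype.card_fin]
  have hsnn : ∀ x ∈ s, 0 ≤ x := by
    intro x hx
    rcases Finset.mem_insert.1 hx with rfl | hx
    · exact le_refl 0
    · obtain ⟨i, -, rfl⟩ := Finset.mem_image.1 hx
      exact (hpos i).le
  set iP : ℝ → ℝ := fun x => (∏ y ∈ s.erase x, (x - y))⁻¹ with hiP
  set t : ℕ → ℝ := fun n => q (n + 1) / ((n + 1).factorial : ℝ) * Sdd (n + 1) s with ht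
  have hsummand : ∀ i : Fin M,
      Summable (fun n : ℕ => μ i ^ (n + 1) / ((n + 1).factorial : ℝ) * q (n + 1)) := by
    intro i
    refine Summable.of_nonneg_of_le ?_ ?_ (summable_inv_fact.mul_right 2)
    · intro n
      have := hq0 n
      have := (hpos i).le
      positivity
    · intro n
      have h1 : μ i ^ (n + 1) ≤ 1 := pow_le_one₀ (hpos i).le (hle i)
      have h3 : ((n).factorial : ℝ) ≤ ((n + 1).factorial : ℝ) := by
        exact_mod_cast Nat.factorial_le (Nat.le_succ n)
      have h4 : (0:ℝ) < (n).factorial := by positivity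
      have h5 : μ i ^ (n + 1) / ((n + 1).factorial : ℝ) ≤ 1 / ((n).factorial : ℝ) :=
        div_le_div₀ (by norm_num) h1 h4 h3
      exact mul_le_mul h5 (hq2 n) (hq0 n) (by positivity)
  -- Sdd over s splits into the μ-indexed sum (0 contributes nothing)
  have hSdd_im : ∀ n : ℕ, Sdd (n + 1) s = ∑ i : Fin M, μ i ^ (n + 1) * iP (μ i) := by
    intro n
    rw [Sdd, hs, Finset.sum_insert h0nim]
    rw [zero_pow (Nat.succ_ne_zero n), zero_mul, zero_add]
    rw [Finset.sum_image (fun a _ b _ h => hinj h)]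
  -- Step 1 : X_M / M! as a finite sum against Sdd
  have step1 : X ⟨M - 1, by omega⟩ / (M.factorial : ℝ)
      = ∑ n : Fin M, X n / (((n : ℕ) + 1).factorial : ℝ) * Sdd ((n : ℕ) + 1) s := by
    have hdel : ∀ n : Fin M, Sdd ((n : ℕ) + 1) s = if (n : ℕ) + 1 = M then 1 else 0 := by
      intro n
      have h1 : (n : ℕ) + 1 ≤ M := n.2
      simpa using Sdd_delta M s hcard ((n : ℕ) + 1) h1
    have : ∀ n : Fin M, X n / (((n : ℕ) + 1).factorial : ℝ) * Sdd ((n : ℕ) + 1) s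
        = if n = (⟨M - 1, by omega⟩ : Fin M) then X n / (((n : ℕ) + 1).factorial : ℝ) else 0 := by
      intro n
      rw [hdel n, mul_ite, mul_one, mul_zero]
      congr 1
      simp only [eq_iff_iff]
      constructor
      · intro h; apply Fin.ext; simp; omega
      · intro h; rw [h]; simp; omega
    rw [Finset.sum_congr rfl (fun n _ => this n), Finset.sum_ite_eq' Finset.univ]
    simp only [Finset.mem_univ, if_pos]
    have hMM : M - 1 + 1 = M := Nat.succ_pred_eq_of_pos hM
    rw [hMM]
  -- Step 2 : swap the finite sums
  have step2 : ∑ n : Fin M, X n / (((n : ℕ) + 1).factorial : ℝ) * Sdd ((n : ℕ) + 1) s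
      = ∑ i : Fin M, iP (μ i) *
          (∑ n : Fin M, μ i ^ ((n : ℕ) + 1) / (((n : ℕ) + 1).factorial : ℝ) * X n) := by
    have : ∀ n : Fin M, X n / (((n : ℕ) + 1).factorial : ℝ) * Sdd ((n : ℕ) + 1) s
        = ∑ i : Fin M, iP (μ i) *
            (μ i ^ ((n : ℕ) + 1) / (((n : ℕ) + 1).factorial : ℝ) * X n) := by
      intro n
      rw [hSdd_im (n : ℕ), Finset.mul_sum]
      apply Finset.sum_congr rfl
      intro i _
      ring
    rw [Finset.sum_congr rfl (fun n _ => this n), Finset.sum_comm]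
    apply Finset.sum_congr rfl
    intro i _
    rw [Finset.mul_sum]
  -- Step 3 : use hX and push the constant into the tsum, then swap sum and tsum
  have step3 : ∑ i : Fin M, iP (μ i) *
      (∑ n : Fin M, μ i ^ ((n : ℕ) + 1) / (((n : ℕ) + 1).factorial : ℝ) * X n)
      = ∑' n : ℕ, ∑ i : Fin M,
          iP (μ i) * (μ i ^ (n + 1) / ((n + 1).factorial : ℝ) * q (n + 1)) := by
    rw [Finset.sum_congr rfl (fun i _ => by rw [hX i, ← tsum_mul_left])]
    exact (Summable.tsum_finsetSum (fun i _ => (hsummand i).mul_left _)).symm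
  -- Step 4 : identify the summand with t
  have step4 : ∀ n : ℕ, ∑ i : Fin M,
      iP (μ i) * (μ i ^ (n + 1) / ((n + 1).factorial : ℝ) * q (n + 1)) = t n := by
    intro n
    rw [ht]
    simp only []
    rw [hSdd_im n, Finset.mul_sum]
    apply Finset.sum_congr rfl
    intro i _
    ring
  have hmain : X ⟨M - 1, by omega⟩ / (M.factorial : ℝ) = ∑' n : ℕ, t n := by
    rw [step1, step2, step3]
    exact tsum_congr step4
  -- positivity of t and summability
  have htnn : ∀ n : ℕ, 0 ≤ t n := by
    intro n
    rw [ht]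
    apply mul_nonneg
    · have := hq0 n
      positivity
    · rcases le_or_gt M (n + 1) with h | h
      · exact Sdd_nonneg (n + 1) s hsnn (by omega)
      · rw [Sdd_delta M s hcard (n + 1) (by omega), if_neg (by omega)]
  have htsum : Summable t := by
    apply Summable.congr _ step4
    exact summable_sum (fun i _ => (hsummand i).mul_left _)
  -- conclude
  have hterm : t (M - 1) ≤ ∑' n : ℕ, t n := Summable.le_tsum htsum (M - 1) (fun j _ => htnn j)
  have htM : t (M - 1) = q M / (M.factorial : ℝ) := by
    rw [ht]
    simp only []
    have hMM : M - 1 + 1 = M := by omega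
    rw [hMM, Sdd_delta M s hcard M le_rfl, if_pos rfl, mul_one]
  rw [hmain]
  rw [← htM]
  exact hterm

lemma youngCells_single (k : ℕ) : youngCells [k] = {0} ×ˢ Finset.range k := by
  simp [youngCells]

lemma schur_nonneg_s19 (M : ℕ) (μ : Fin M → ℝ) (h : ∀ i, 0 ≤ μ i) (lam : List ℕ) :
    0 ≤ schur M μ lam := by
  apply Finset.sum_nonneg
  intro T _
  split
  · exact Finset.prod_nonneg fun c _ => h _
  · exact le_refl 0

lemma mem_youngCells_single {k : ℕ} {c : ℕ × ℕ} :
    c ∈ youngCells [k] ↔ c.1 = 0 ∧ c.2 < k := by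
  rw [youngCells_single]
  simp only [Finset.mem_product, Finset.mem_singleton, Finset.mem_range]

lemma schur_single_le (M : ℕ) (hM : 0 < M) (μ : Fin M → ℝ)
    (h0 : ∀ i, 0 ≤ μ i) (h1 : ∀ i, μ i ≤ 1) (k : ℕ) :
    schur M μ [k] ≤ ((M + k - 1).choose k : ℝ) := by
  classical
  set C := youngCells [k] with hC
  have ecell : ∀ j : Fin k, (0, (j : ℕ)) ∈ C := fun j => by
    rw [hC, mem_youngCells_single]; exact ⟨rfl, j.2⟩
  set e : Fin k → ↥C := fun j => ⟨(0, (j : ℕ)), ecell j⟩ with he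
  set P : (↥C → Fin M) → Prop := fun T =>
      (∀ c c' : ↥C,
          (c : ℕ × ℕ).1 = (c' : ℕ × ℕ).1 → (c : ℕ × ℕ).2 + 1 = (c' : ℕ × ℕ).2 → T c ≤ T c') ∧
      (∀ c c' : ↥C,
          (c : ℕ × ℕ).1 + 1 = (c' : ℕ × ℕ).1 → (c : ℕ × ℕ).2 = (c' : ℕ × ℕ).2 → T c < T c')
    with hP
  have hstep1 : schur M μ [k] ≤ ((Finset.univ.filter P).card : ℝ) := by
    rw [schur, ← Finset.sum_boole]
    apply Finset.sum_le_sum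
    intro T _
    by_cases h : P T
    · rw [if_pos h, if_pos h]
      exact Finset.prod_le_one (fun c _ => h0 _) (fun c _ => h1 _)
    · rw [if_neg h, if_neg h]
  have hmono : ∀ T, P T → Monotone (fun j : Fin k => T (e j)) := by
    intro T hT
    have key : ∀ (d a : ℕ) (ha : a < k) (h : a + d < k),
        T (e ⟨a, ha⟩) ≤ T (e ⟨a + d, h⟩) := by
      intro d
      induction d with
      | zero => intro a ha h; exact le_refl _
      | succ d ihd =>
        intro a ha h
        refine le_trans (ihd a ha (by omega)) ?_
        refine hT.1 (e ⟨a + d, by omega⟩) (e ⟨a + d + 1, by omega⟩) rfl rfl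
    intro a b hab
    have := key ((b : ℕ) - (a : ℕ)) (a : ℕ) a.2 (by omega)
    have hb : (⟨(a : ℕ) + ((b : ℕ) - (a : ℕ)), by omega⟩ : Fin k) = b := by
      apply Fin.ext; simp; omega
    rwa [hb] at this
  have hstep2 : (Finset.univ.filter P).card ≤ Fintype.card (Sym (Fin M) k) := by
    rw [← Finset.card_univ]
    apply Finset.card_le_card_of_injOn
      (fun T => Sym.mk (↑(List.ofFn (fun j => T (e j))) : Multiset (Fin M)) (by simp))
    · intro T _; exact Finset.mem_univ _
    · intro T hT T' hT' hφ
      have hPT : P T := (Finset.mem_filter.1 hT).2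
      have hPT' : P T' := (Finset.mem_filter.1 hT').2
      have hml : (List.ofFn (fun j => T (e j)) : Multiset (Fin M))
          = (List.ofFn (fun j => T' (e j)) : Multiset (Fin M)) := by
        exact congrArg Sym.toMultiset hφ
      have hperm := Multiset.coe_eq_coe.1 hml
      have hsid : List.ofFn (fun j => T (e j)) = List.ofFn (fun j => T' (e j)) :=
        List.Perm.eq_of_sortedLE
          ((hmono T hPT).sortedLE_ofFn) ((hmono T' hPT').sortedLE_ofFn) hperm
      have hfeq := List.ofFn_injective hsid
      funext c
      have hc := mem_youngCells_single.1 c.2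
      have hce : e ⟨(c : ℕ × ℕ).2, hc.2⟩ = c := by
        apply Subtype.ext
        exact Prod.ext hc.1.symm rfl
      calc T c = T (e ⟨(c : ℕ × ℕ).2, hc.2⟩) := by rw [hce]
        _ = T' (e ⟨(c : ℕ × ℕ).2, hc.2⟩) := congrFun hfeq _
        _ = T' c := by rw [hce]
  have hcard : Fintype.card (Sym (Fin M) k) = (M + k - 1).choose k := by
    rw [Sym.card_sym_eq_choose, Fintype.card_fin]
  calc schur M μ [k] ≤ ((Finset.univ.filter P).card : ℝ) := hstep1
    _ ≤ ((M + k - 1).choose k : ℝ) := by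
        rw [← hcard]; exact_mod_cast hstep2

/-- Upper bound on the cut-off `L₀` in the configuration `Z` for `M` odd-type
analysis: if `(L₀, a₀)` satisfies `Z_M = 0`, i.e.
`X_M / M! = (a₀ / L₀!) s_(L₀-M)(μ) + ∑_{m=L₀+1}^∞ s_(m-M)(μ)/m!`,
then `L₀ (L₀ - M)! ≤ M e / q M`. -/
theorem L0_bound (M : ℕ) (hM : 0 < M)
    (μ : Fin M → ℝ) (hpos : ∀ i, 0 < μ i) (hle : ∀ i, μ i ≤ 1)
    (hinj : Function.Injective μ)
    (A B η : ℝ) (hA0 : 0 < A) (hA1 : A ≤ 1) (hB0 : 0 ≤ B) (hBη : B ≤ η)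
    (hη0 : 0 < η) (hη1 : η ≤ 1)
    (q : ℕ → ℝ) (hq : ∀ n, q n = A * (1 - (1 - η) ^ n) + B)
    (X : Fin M → ℝ)
    (hX : ∀ i : Fin M,
      ∑ n : Fin M, μ i ^ ((n : ℕ) + 1) / (((n : ℕ) + 1).factorial : ℝ) * X n =
        ∑' n : ℕ, μ i ^ (n + 1) / ((n + 1).factorial : ℝ) * q (n + 1))
    (L₀ : ℕ) (hL₀ : M < L₀) (a₀ : ℝ) (ha₀ : 0 < a₀) (ha₀' : a₀ ≤ 1)
    (heq : X ⟨M - 1, by omega⟩ / (M.factorial : ℝ) =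
      a₀ / (L₀.factorial : ℝ) * schur M μ [L₀ - M] +
      ∑' k : ℕ, (1 / ((L₀ + 1 + k).factorial : ℝ)) * schur M μ [L₀ + 1 + k - M]) :
    (L₀ : ℝ) * ((L₀ - M).factorial : ℝ) ≤ (M : ℝ) * Real.exp 1 / q M := by
  classical
  have h1η : 0 ≤ 1 - η := by linarith
  have hq0 : ∀ n : ℕ, 0 ≤ q (n + 1) := by
    intro n
    rw [hq]
    have h2 : (1 - η) ^ (n + 1) ≤ 1 := pow_le_one₀ h1η (by linarith)
    nlinarith
  have hq2 : ∀ n : ℕ, q (n + 1) ≤ 2 := by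
    intro n
    rw [hq]
    have h1 : 0 ≤ (1 - η) ^ (n + 1) := pow_nonneg h1η _
    nlinarith
  have hqM : 0 < q M := by
    rw [hq]
    have h1 : (1 - η) ^ M ≤ (1 - η) ^ 1 := pow_le_pow_of_le_one h1η (by linarith) hM
    have h2 : 0 < A * η := mul_pos hA0 hη0
    rw [pow_one] at h1
    nlinarith
  have hXM := XM_ge M hM μ hpos hle hinj q hq0 hq2 X hX
  -- abbreviations
  set F1 : ℝ := ((M - 1).factorial : ℝ) with hF1
  have hF1pos : 0 < F1 := by rw [hF1]; positivity
  have hL₀pos : (0:ℝ) < (L₀ : ℝ) := by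
    have : 0 < L₀ := by omega
    exact_mod_cast this
  set c : ℝ := 1 / ((L₀ : ℝ) * F1) with hc
  have hcpos : 0 < c := by rw [hc]; positivity
  -- key term bound
  have key : ∀ m : ℕ, L₀ ≤ m → (1 / (m.factorial : ℝ)) * schur M μ [m - M]
      ≤ c * (1 / (((m - M).factorial : ℝ))) := by
    intro m hm
    have hMm : M ≤ m := by omega
    have hsch := schur_single_le M hM μ (fun i => (hpos i).le) hle (m - M)
    have hchoose : M + (m - M) - 1 = m - 1 := by omega
    rw [hchoose] at hsch
    have hfacnat : (m - 1).choose (m - M) * (m - M).factorial * (M - 1).factorial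
        = (m - 1).factorial := by
      have h := Nat.choose_mul_factorial_mul_factorial (show m - M ≤ m - 1 by omega)
      have h2 : m - 1 - (m - M) = M - 1 := by omega
      rw [h2] at h
      exact h
    have hfac : ((m - 1).choose (m - M) : ℝ) * ((m - M).factorial : ℝ) * F1
        = ((m - 1).factorial : ℝ) := by
      rw [hF1]; exact_mod_cast hfacnat
    have hmfac : (m : ℝ) * ((m - 1).factorial : ℝ) = (m.factorial : ℝ) := by
      exact_mod_cast Nat.mul_factorial_pred (show m ≠ 0 by omega)
    have goal' : ((m - 1).choose (m - M) : ℝ) / (m.factorial : ℝ)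
        ≤ 1 / ((L₀ : ℝ) * F1 * ((m - M).factorial : ℝ)) := by
      rw [div_le_div_iff₀ (by positivity) (by positivity)]
      have h6 : ((m - 1).choose (m - M) : ℝ) * ((L₀ : ℝ) * F1 * ((m - M).factorial : ℝ))
          = (L₀ : ℝ) * ((m - 1).factorial : ℝ) := by
        rw [← hfac]; ring
      have hL : (L₀ : ℝ) ≤ (m : ℝ) := by exact_mod_cast hm
      have h7 : (L₀ : ℝ) * ((m - 1).factorial : ℝ) ≤ (m : ℝ) * ((m - 1).factorial : ℝ) :=
        mul_le_mul_of_nonneg_right hL (by positivity)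
      rw [h6, one_mul]
      linarith [hmfac]
    calc (1 / (m.factorial : ℝ)) * schur M μ [m - M]
        ≤ (1 / (m.factorial : ℝ)) * ((m - 1).choose (m - M) : ℝ) :=
          mul_le_mul_of_nonneg_left hsch (by positivity)
      _ = ((m - 1).choose (m - M) : ℝ) / (m.factorial : ℝ) := by ring
      _ ≤ 1 / ((L₀ : ℝ) * F1 * ((m - M).factorial : ℝ)) := goal'
      _ = c * (1 / (((m - M).factorial : ℝ))) := by
          rw [hc]; ring
  -- bound on the first term
  have hterm1 : a₀ / (L₀.factorial : ℝ) * schur M μ [L₀ - M]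
      ≤ c * (1 / (((L₀ - M).factorial : ℝ))) := by
    refine le_trans ?_ (key L₀ le_rfl)
    have hnn := schur_nonneg_s19 M μ (fun i => (hpos i).le) [L₀ - M]
    have hfp : (0:ℝ) < (L₀.factorial : ℝ) := by positivity
    exact mul_le_mul_of_nonneg_right ((div_le_div_iff_of_pos_right hfp).mpr ha₀') hnn
  -- bound on the tail
  have hidx : ∀ k : ℕ, L₀ + 1 + k - M = (L₀ - M + 1) + k := by intro k; omega
  have hkey' : ∀ k : ℕ, 1 / ((L₀ + 1 + k).factorial : ℝ) * schur M μ [L₀ + 1 + k - M]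
      ≤ c * (1 / ((((L₀ - M + 1) + k).factorial : ℝ))) := by
    intro k
    have h := key (L₀ + 1 + k) (by omega)
    have e : ((L₀ + 1 + k - M).factorial : ℝ) = (((L₀ - M + 1 + k)).factorial : ℝ) := by
      rw [hidx k]
    rw [e] at h
    exact h
  have hg : Summable (fun k : ℕ => c * (1 / ((((L₀ - M + 1) + k).factorial : ℝ)))) :=
    (summable_inv_fact_add (L₀ - M + 1)).mul_left c
  have hfnn : ∀ k : ℕ, 0 ≤ 1 / ((L₀ + 1 + k).factorial : ℝ) * schur M μ [L₀ + 1 + k - M] := by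
    intro k
    exact mul_nonneg (by positivity) (schur_nonneg_s19 M μ (fun i => (hpos i).le) _)
  have hf : Summable (fun k : ℕ => 1 / ((L₀ + 1 + k).factorial : ℝ) * schur M μ [L₀ + 1 + k - M]) :=
    Summable.of_nonneg_of_le hfnn hkey' hg
  have hterm2 : ∑' k : ℕ, 1 / ((L₀ + 1 + k).factorial : ℝ) * schur M μ [L₀ + 1 + k - M]
      ≤ c * ∑' k : ℕ, 1 / ((((L₀ - M + 1) + k).factorial : ℝ)) := by
    rw [← tsum_mul_left]
    exact Summable.tsum_le_tsum hkey' hf hg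
  -- combine: the total is at most c * exp 1 / (L₀ - M)!
  have hcomb : X ⟨M - 1, by omega⟩ / (M.factorial : ℝ)
      ≤ c * (Real.exp 1 / (((L₀ - M).factorial : ℝ))) := by
    rw [heq]
    have hsplit : (1 : ℝ) / (((L₀ - M).factorial : ℝ))
        + ∑' k : ℕ, 1 / ((((L₀ - M + 1) + k).factorial : ℝ))
        = ∑' u : ℕ, 1 / ((((L₀ - M) + u).factorial : ℝ)) := by
      rw [Summable.tsum_eq_zero_add (summable_inv_fact_add (L₀ - M))]
      have e1 : (1:ℝ) / (((L₀ - M).factorial : ℝ)) = 1 / ((((L₀ - M) + 0).factorial : ℝ)) := by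
        norm_num
      have e2 : ∀ k : ℕ, (1:ℝ) / ((((L₀ - M + 1) + k).factorial : ℝ))
          = 1 / ((((L₀ - M) + (k + 1)).factorial : ℝ)) := by
        intro k
        rw [show L₀ - M + 1 + k = L₀ - M + (k + 1) from by omega]
      rw [e1, tsum_congr e2]
    calc a₀ / (L₀.factorial : ℝ) * schur M μ [L₀ - M]
          + ∑' k : ℕ, 1 / ((L₀ + 1 + k).factorial : ℝ) * schur M μ [L₀ + 1 + k - M]
        ≤ c * (1 / (((L₀ - M).factorial : ℝ)))
          + c * ∑' k : ℕ, 1 / ((((L₀ - M + 1) + k).factorial : ℝ)) := by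
          exact add_le_add hterm1 hterm2
      _ = c * (1 / (((L₀ - M).factorial : ℝ))
          + ∑' k : ℕ, 1 / ((((L₀ - M + 1) + k).factorial : ℝ))) := by ring
      _ = c * ∑' u : ℕ, 1 / ((((L₀ - M) + u).factorial : ℝ)) := by rw [hsplit]
      _ ≤ c * (Real.exp 1 / (((L₀ - M).factorial : ℝ))) := by
          exact mul_le_mul_of_nonneg_left (tsum_inv_fact_add_le (L₀ - M)) hcpos.le
  -- final arithmetic
  have hfinal : q M / (M.factorial : ℝ) ≤ c * (Real.exp 1 / (((L₀ - M).factorial : ℝ))) :=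
    le_trans hXM hcomb
  have hMfac : (M.factorial : ℝ) = (M : ℝ) * F1 := by
    rw [hF1]
    exact_mod_cast (Nat.mul_factorial_pred hM.ne').symm
  have hcross : q M * ((L₀ : ℝ) * F1 * ((L₀ - M).factorial : ℝ))
      ≤ Real.exp 1 * (M.factorial : ℝ) := by
    have h8 : c * (Real.exp 1 / (((L₀ - M).factorial : ℝ)))
        = Real.exp 1 / ((L₀ : ℝ) * F1 * ((L₀ - M).factorial : ℝ)) := by
      rw [hc]; ring
    rw [h8] at hfinal
    rw [div_le_div_iff₀ (by positivity) (by positivity)] at hfinal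
    exact hfinal
  rw [le_div_iff₀ hqM]
  have hfpos : (0:ℝ) < ((L₀ - M).factorial : ℝ) := by positivity
  have h9 : ((L₀ : ℝ) * ((L₀ - M).factorial : ℝ) * q M) * F1
      ≤ ((M : ℝ) * Real.exp 1) * F1 := by
    rw [hMfac] at hcross
    calc ((L₀ : ℝ) * ((L₀ - M).factorial : ℝ) * q M) * F1
        = q M * ((L₀ : ℝ) * F1 * ((L₀ - M).factorial : ℝ)) := by ring
      _ ≤ Real.exp 1 * ((M : ℝ) * F1) := hcross
      _ = ((M : ℝ) * Real.exp 1) * F1 := by ring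
  exact (mul_le_mul_iff_of_pos_right hF1pos).mp h9
end
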